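/- arXiv:1503.05999 — 2 statements merged into one kernel-verified Lean document; each statement's English description precedes it below -/
import Mathlib

section
/- Let m = p_1^{k_1} p_2^{k_2} ⋯ p_h^{k_h} be the prime factorization of m ≥ 2 (distinct primes p_i, k_i ≥ 1), let T_f be a surjective linear cellular automaton on (ZMod m)^ℤ, and for each i let T_{p_i^{k_i}} be the linear cellular automaton on (ZMod p_i^{k_i})^ℤ whose local rule is f reduced modulo p_i^{k_i}. Then T_f is ergodic with respect to the uniform Bernoulli measure on (ZMod m)^ℤ if and only if T_{p_i^{k_i}} is ergodic with respect to the uniform Bernoulli measure on (ZMod p_i^{k_i})^ℤ for every 1 ≤ i ≤ h. -/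
open MeasureTheory Filter

/-- The linear cellular automaton on `(ZMod m)^ℤ` with local rule
`f(x_l, …, x_r) = Σ_{j=l}^{r} λ_j x_j (mod m)`. -/
noncomputable def cellAuto (m : ℕ) (l r : ℤ) (lam : ℤ → ZMod m) :
    (ℤ → ZMod m) → (ℤ → ZMod m) :=
  fun x i => ∑ j ∈ Finset.Icc l r, lam j * x (i + j)

/-- `μ` is the uniform Bernoulli measure on `(ZMod d)^ℤ`: the infinite product over `ℤ`
of the uniform probability measure on `ZMod d`, characterized by its values on cylinders. -/
def IsUniformBernoulli (d : ℕ) (μ : Measure (ℤ → ZMod d)) : Prop :=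
  IsProbabilityMeasure μ ∧
    ∀ (s : Finset ℤ) (a : ℤ → ZMod d),
      μ {x | ∀ i ∈ s, x i = a i} = ((d : ENNReal))⁻¹ ^ s.card

/-- `T` is ergodic with respect to `μ`: every measurable `T`-invariant set is null or conull. -/
def IsErgodic {X : Type*} [MeasurableSpace X] (T : X → X) (μ : Measure X) : Prop :=
  ∀ A : Set X, MeasurableSet A → T ⁻¹' A = A → μ A = 0 ∨ μ A = 1

namespace LCAaux
variable {d : ℕ} [NeZero d]

/-- cylinder set -/
def cyl (d : ℕ) (s : Finset ℤ) (a : ℤ → ZMod d) : Set (ℤ → ZMod d) := {x | ∀ i ∈ s, x i = a i}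

lemma measurableSet_cyl (s : Finset ℤ) (a : ℤ → ZMod d) : MeasurableSet (cyl d s a) := by
  have : cyl d s a = ⋂ i ∈ s, (fun x : ℤ → ZMod d => x i) ⁻¹' {a i} := by
    ext x; simp [cyl]
  rw [this]
  exact MeasurableSet.biInter s.countable_toSet
    (fun i _ => measurable_pi_apply i (measurableSet_singleton (a i)))

def cylSystem (d : ℕ) : Set (Set (ℤ → ZMod d)) :=
  {C | ∃ (s : Finset ℤ) (a : ℤ → ZMod d), C = cyl d s a}

lemma isPiSystem_cylSystem : IsPiSystem (cylSystem d) := by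
  rintro C ⟨s, a, rfl⟩ D ⟨t, b, rfl⟩ ⟨y, hy⟩
  classical
  refine ⟨s ∪ t, fun i => if i ∈ s then a i else b i, ?_⟩
  obtain ⟨hy1, hy2⟩ := hy
  have hab : ∀ i ∈ s, ∀ _ : i ∈ t, a i = b i := fun i hi hit => by
    rw [← hy1 i hi, hy2 i hit]
  ext x
  simp only [Set.mem_inter_iff, cyl, Set.mem_setOf_eq, Finset.mem_union]
  constructor
  · rintro ⟨h1, h2⟩ i hi
    rcases hi with hi | hi
    · simp [hi, h1 i hi]
    · by_cases his : i ∈ s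
      · simp [his, h1 i his]
      · simp [his, h2 i hi]
  · intro h
    constructor
    · intro i hi; have := h i (Or.inl hi); simpa [hi] using this
    · intro i hi
      by_cases his : i ∈ s
      · have := h i (Or.inl his); simp only [his, if_pos] at this
        rw [this, ← hab i his hi]
      · have := h i (Or.inr hi); simpa [his] using this

lemma pi_eq_generateFrom_cyl :
    (inferInstance : MeasurableSpace (ℤ → ZMod d)) =
      MeasurableSpace.generateFrom (cylSystem d) := by
  refine le_antisymm ?_ (MeasurableSpace.generateFrom_le ?_)
  · set g := MeasurableSpace.generateFrom (cylSystem d) with hg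
    have heval : ∀ i : ℤ, @Measurable _ _ g _ (fun x : ℤ → ZMod d => x i) := by
      intro i
      apply @measurable_to_countable' _ _ _ _ g
      intro v
      refine MeasurableSpace.measurableSet_generateFrom ⟨{i}, fun _ => v, ?_⟩
      ext x; simp [cyl]
    have hid : @Measurable _ _ g MeasurableSpace.pi (fun x : ℤ → ZMod d => x) :=
      measurable_pi_lambda _ heval
    exact fun S hS => hid hS
  · rintro C ⟨s, a, rfl⟩
    exact measurableSet_cyl s a

/-- uniqueness of measures agreeing on cylinders -/
lemma measure_eq_of_cyl (μ ν : Measure (ℤ → ZMod d)) [IsFiniteMeasure μ]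
    (huniv : μ Set.univ = ν Set.univ)
    (h : ∀ (s : Finset ℤ) (a : ℤ → ZMod d), μ (cyl d s a) = ν (cyl d s a)) : μ = ν := by
  refine ext_of_generate_finite (cylSystem d) pi_eq_generateFrom_cyl isPiSystem_cylSystem ?_ huniv
  rintro C ⟨s, a, rfl⟩
  exact h s a

lemma ub_cyl {μ : Measure (ℤ → ZMod d)} (hμ : IsUniformBernoulli d μ)
    (s : Finset ℤ) (a : ℤ → ZMod d) :
    μ (cyl d s a) = (((d : ENNReal)) ^ s.card)⁻¹ := by
  rw [ENNReal.inv_pow]; exact hμ.2 s a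

/-- extension of a function on a finset -/
noncomputable def ext0 (d : ℕ) (s : Finset ℤ) (w : s → ZMod d) : ℤ → ZMod d :=
  fun i => if h : i ∈ s then w ⟨i, h⟩ else 0

lemma restr_mem_cyl_iff (s : Finset ℤ) (w : s → ZMod d) (x : ℤ → ZMod d) :
    x ∈ cyl d s (ext0 d s w) ↔ (fun i : s => x i) = w := by
  constructor
  · intro h; funext i; have := h i i.2; simpa [ext0, i.2] using this
  · intro h i hi; have := congrFun h ⟨i, hi⟩; simpa [ext0, hi] using this

/-- measure of a set determined by coordinates in `s` -/
lemma meas_depends {μ : Measure (ℤ → ZMod d)} (hμ : IsUniformBernoulli d μ)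
    (s : Finset ℤ) (V : Finset (s → ZMod d)) :
    μ {x | (fun i : s => x i) ∈ V} = V.card * (((d : ENNReal)) ^ s.card)⁻¹ := by
  classical
  have hdec : {x : ℤ → ZMod d | (fun i : s => x i) ∈ V} = ⋃ w ∈ V, cyl d s (ext0 d s w) := by
    ext x
    simp only [Set.mem_setOf_eq, Set.mem_iUnion]
    constructor
    · intro h; exact ⟨_, h, (restr_mem_cyl_iff s _ x).2 rfl⟩
    · rintro ⟨w, hw, hx⟩; rw [(restr_mem_cyl_iff s w x).1 hx]; exact hw
  rw [hdec, measure_biUnion_finset ?_ (fun w _ => measurableSet_cyl s _)]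
  · rw [Finset.sum_congr rfl (fun w _ => ub_cyl hμ s (ext0 d s w))]
    simp [Finset.sum_const, mul_comm]
  · intro w _ w' _ hne
    simp only [Function.onFun]
    refine Set.disjoint_left.2 fun x hx hx' => hne ?_
    rw [← (restr_mem_cyl_iff s w x).1 hx, ← (restr_mem_cyl_iff s w' x).1 hx']

/-- fibers of surjective additive hom between finite groups -/
lemma card_fiber {G H : Type*} [AddGroup G] [AddGroup H] [Fintype G] [Fintype H]
    [DecidableEq H] (L : G →+ H) (hL : Function.Surjective L) (b : H) :
    (Finset.univ.filter (fun g => L g = b)).card * Fintype.card H = Fintype.card G := by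
  classical
  have hcardeq : ∀ b' : H, (Finset.univ.filter (fun g => L g = b')).card
      = (Finset.univ.filter (fun g => L g = 0)).card := by
    intro b'
    obtain ⟨g0, hg0⟩ := hL b'
    apply Finset.card_bij (fun g _ => g - g0)
    · intro g hg
      simp only [Finset.mem_filter, Finset.mem_univ, true_and] at hg ⊢
      simp [map_sub, hg, hg0]
    · intro g hg g' hg' h
      exact sub_left_injective h
    · intro g hg
      refine ⟨g + g0, ?_, by simp⟩
      simp only [Finset.mem_filter, Finset.mem_univ, true_and] at hg ⊢
      simp [map_add, hg, hg0]
  have : Fintype.card G = ∑ b' : H, (Finset.univ.filter (fun g => L g = b')).card := by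
    rw [← Finset.card_univ, Finset.card_eq_sum_card_fiberwise (f := fun g => L g)
      (fun g _ => Finset.mem_univ _)]
  rw [this, Finset.sum_congr rfl (fun b' _ => hcardeq b'), Finset.sum_const, Finset.card_univ,
    hcardeq b, smul_eq_mul, mul_comm]

/-- the key measure computation: preimage under a surjective additive map of coordinates -/
lemma meas_preimage_addHom {μ : Measure (ℤ → ZMod d)} (hμ : IsUniformBernoulli d μ)
    (W : Finset ℤ) {H : Type*} [AddCommGroup H] [Fintype H] [DecidableEq H]
    (L : ((i : W) → ZMod d) →+ H) (hL : Function.Surjective L) (b : H) :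
    μ {x | L (fun i : W => x i) = b} = ((Fintype.card H : ENNReal))⁻¹ := by
  classical
  have h1 : {x : ℤ → ZMod d | L (fun i : W => x i) = b}
      = {x | (fun i : W => x i) ∈ Finset.univ.filter (fun w => L w = b)} := by
    ext x; simp
  rw [h1, meas_depends hμ]
  have hcard := card_fiber L hL b
  have hG : Fintype.card ((i : W) → ZMod d) = d ^ W.card := by
    rw [Fintype.card_fun, ZMod.card, Fintype.card_coe]
  rw [hG] at hcard
  -- now : N * card H = d ^ W.card  in ℕ; conclude N * (d^W.card)⁻¹ = (card H)⁻¹ in ENNReal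
  set N := (Finset.univ.filter (fun w => L w = b)).card
  have hH0 : (Fintype.card H : ENNReal) ≠ 0 := by
    simp [Fintype.card_ne_zero]
  have hHtop : (Fintype.card H : ENNReal) ≠ ⊤ := by simp
  have hd0 : ((d : ENNReal)) ^ W.card ≠ 0 := by
    simp [NeZero.ne d]
  have hdtop : ((d : ENNReal)) ^ W.card ≠ ⊤ := by
    exact ENNReal.pow_ne_top (by simp)
  have hcast : (N : ENNReal) * (Fintype.card H : ENNReal) = ((d : ENNReal)) ^ W.card := by
    rw [← Nat.cast_mul, hcard]; push_cast; ring
  have hN0 : (N : ENNReal) ≠ 0 := by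
    have : N ≠ 0 := by
      intro h; rw [h, zero_mul] at hcard
      exact (pow_ne_zero W.card (NeZero.ne d)) hcard.symm
    exact_mod_cast Nat.cast_ne_zero.2 this
  have hNtop : (N : ENNReal) ≠ ⊤ := by simp
  rw [← hcast, ENNReal.mul_inv (Or.inl hN0) (Or.inl hNtop), ← mul_assoc,
    ENNReal.mul_inv_cancel hN0 hNtop, one_mul]

noncomputable def eN (d n : ℕ) : ℂ :=
  Complex.exp (((2 * Real.pi * ((n : ℝ) / (d : ℝ)) : ℝ) : ℂ) * Complex.I)

lemma eN_add (d : ℕ) (m n : ℕ) : eN d (m + n) = eN d m * eN d n := by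
  rw [eN, eN, eN, ← Complex.exp_add]
  congr 1
  push_cast
  ring

lemma eN_mul_d (k : ℕ) : eN d (d * k) = 1 := by
  have hd : (d : ℝ) ≠ 0 := Nat.cast_ne_zero.2 (NeZero.ne d)
  have h0 : (((d * k : ℕ) : ℝ) / (d : ℝ)) = (k : ℝ) := by
    rw [Nat.cast_mul]; exact mul_div_cancel_left₀ _ hd
  rw [eN, show (2 * Real.pi * (((d * k : ℕ) : ℝ) / (d : ℝ)) : ℝ)
    = (2 * Real.pi * (k : ℝ) : ℝ) from by rw [h0]]
  have : ((2 * Real.pi * (k : ℝ) : ℝ) : ℂ) * Complex.I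
      = ((k : ℤ) : ℂ) * (2 * (Real.pi : ℂ) * Complex.I) := by push_cast; ring
  rw [this, Complex.exp_int_mul_two_pi_mul_I]

noncomputable def psi (d : ℕ) (a : ZMod d) : ℂ := eN d a.val

lemma psi_zero : psi d (0 : ZMod d) = 1 := by
  simp [psi, eN, ZMod.val_zero]

lemma psi_add (a b : ZMod d) : psi d (a + b) = psi d a * psi d b := by
  rw [psi, psi, psi, ZMod.val_add, ← eN_add]
  conv_rhs => rw [show a.val + b.val = d * ((a.val + b.val) / d) + (a.val + b.val) % d from
    by rw [Nat.div_add_mod]]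
  rw [eN_add, eN_mul_d, one_mul]

lemma psi_abs (a : ZMod d) : ‖psi d a‖ = 1 := by
  rw [psi, eN]; exact Complex.norm_exp_ofReal_mul_I _

lemma psi_ne_zero (a : ZMod d) : psi d a ≠ 0 := Complex.exp_ne_zero _

lemma psi_eq_one_iff (a : ZMod d) : psi d a = 1 ↔ a = 0 := by
  constructor
  · intro h
    rw [psi, eN, Complex.exp_eq_one_iff] at h
    obtain ⟨n, hn⟩ := h
    have hI : (Complex.I : ℂ) ≠ 0 := Complex.I_ne_zero
    set x : ℝ := 2 * Real.pi * ((a.val : ℝ) / (d : ℝ)) with hx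
    have hn' : ((x : ℝ) : ℂ) * Complex.I = ((n : ℂ) * (2 * (Real.pi : ℂ))) * Complex.I := by
      rw [hn]; ring
    have h2 : ((x : ℝ) : ℂ) = (n : ℂ) * (2 * (Real.pi : ℂ)) := mul_right_cancel₀ hI hn'
    have h3 : x = (n : ℝ) * (2 * Real.pi) := by exact_mod_cast h2
    have hpi : (2 * Real.pi) ≠ 0 := by positivity
    have h4 : ((a.val : ℝ) / (d : ℝ)) = n := by
      have : (2 * Real.pi) * ((a.val : ℝ) / (d : ℝ)) = (2 * Real.pi) * n := by
        rw [hx] at h3; linarith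
      exact mul_left_cancel₀ hpi this
    have hd : (0:ℝ) < d := by
      exact_mod_cast Nat.pos_of_ne_zero (NeZero.ne d)
    have h5 : (a.val : ℝ) = (n : ℝ) * d := (div_eq_iff (ne_of_gt hd)).1 h4
    have hlt : (a.val : ℝ) < d := by exact_mod_cast ZMod.val_lt a
    have hge : (0:ℝ) ≤ (a.val : ℝ) := by positivity
    have hn0 : n = 0 := by
      by_contra hne
      rcases lt_or_gt_of_ne hne with hlt' | hgt'
      · have : (n:ℝ) ≤ -1 := by exact_mod_cast (show (n:ℤ) ≤ -1 by omega)
        nlinarith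
      · have : (1:ℝ) ≤ (n:ℝ) := by exact_mod_cast (show (1:ℤ) ≤ n by omega)
        nlinarith
    rw [hn0] at h5
    simp only [Int.cast_zero, zero_mul] at h5
    have : a.val = 0 := by exact_mod_cast h5
    exact (ZMod.val_eq_zero a).1 this
  · rintro rfl; exact psi_zero

lemma psi_injective : Function.Injective (psi d) := by
  intro a b h
  have h1 : psi d (a - b) * psi d b = psi d b := by
    rw [← psi_add, sub_add_cancel, h]
  have h2 : psi d (a - b) = 1 :=
    mul_right_cancel₀ (psi_ne_zero b) (by rw [h1, one_mul])
  exact sub_eq_zero.1 ((psi_eq_one_iff _).1 h2)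

lemma conj_psi (a : ZMod d) : (starRingEnd ℂ) (psi d a) = psi d (-a) := by
  have h1 : psi d a * psi d (-a) = 1 := by
    rw [← psi_add, add_neg_cancel, psi_zero]
  have h2 : psi d a * (starRingEnd ℂ) (psi d a) = 1 := by
    rw [Complex.mul_conj]
    norm_cast
    rw [Complex.normSq_eq_norm_sq, psi_abs]; norm_num
  exact mul_left_cancel₀ (psi_ne_zero a) (h2.trans h1.symm)

lemma psi_sum {ι : Type*} (t : Finset ι) (f : ι → ZMod d) :
    psi d (∑ i ∈ t, f i) = ∏ i ∈ t, psi d (f i) := by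
  classical
  induction t using Finset.cons_induction with
  | empty => simp [psi_zero]
  | cons i t hi ih => rw [Finset.sum_cons, Finset.prod_cons, psi_add, ih]

lemma psi_nsmul (n : ℕ) (c : ZMod d) : psi d (n • c) = psi d c ^ n := by
  induction n with
  | zero => simp [psi_zero]
  | succ n ih => rw [succ_nsmul, psi_add, ih, pow_succ]

lemma psi_mul (c a : ZMod d) : psi d (c * a) = psi d c ^ a.val := by
  have : c * a = a.val • c := by
    conv_lhs => rw [show a = ((a.val : ℕ) : ZMod d) by rw [ZMod.natCast_val, ZMod.cast_id]]
    rw [nsmul_eq_mul]; ring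
  rw [this, psi_nsmul]

lemma sum_psi_mul (c : ZMod d) (hc : c ≠ 0) : ∑ a : ZMod d, psi d (c * a) = 0 := by
  classical
  have h1 : ∑ a : ZMod d, psi d (c * a) = ∑ n ∈ Finset.range d, psi d c ^ n := by
    rw [Finset.sum_congr rfl (fun a _ => psi_mul c a)]
    refine Finset.sum_nbij' (fun a => a.val) (fun n => (n : ZMod d)) ?_ ?_ ?_ ?_ ?_
    · intro a _; exact Finset.mem_range.2 (ZMod.val_lt a)
    · intro n _; exact Finset.mem_univ _
    · intro a _
      show ((a.val : ℕ) : ZMod d) = a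
      rw [ZMod.natCast_val, ZMod.cast_id]
    · intro n hn
      exact ZMod.val_cast_of_lt (Finset.mem_range.1 hn)
    · intro a _; rfl
  have h2 : psi d c ^ d = 1 := by
    rw [← psi_nsmul]
    have : (d : ℕ) • c = 0 := by
      rw [nsmul_eq_mul, ZMod.natCast_self, zero_mul]
    rw [this, psi_zero]
  have h3 := geom_sum_mul (psi d c) d
  rw [h2, sub_self] at h3
  have ht1 : psi d c - 1 ≠ 0 := sub_ne_zero.2 (fun h => hc ((psi_eq_one_iff c).1 h))
  have := mul_eq_zero.1 h3
  rcases this with h | h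
  · rw [h1, h]
  · exact absurd h ht1

lemma sum_psi_mul_ite (c : ZMod d) :
    ∑ a : ZMod d, psi d (c * a) = if c = 0 then (d : ℂ) else 0 := by
  split_ifs with h
  · subst h; simp [psi_zero, ZMod.card]
  · exact sum_psi_mul c h

lemma measurable_depends {β : Type*} [MeasurableSpace β] (s : Finset ℤ)
    (G : (s → ZMod d) → β) : Measurable (fun x : ℤ → ZMod d => G (fun i : s => x i)) := by
  exact (measurable_of_countable G).comp
    (measurable_pi_lambda _ (fun i => measurable_pi_apply (i : ℤ)))

/-- integral of a function depending on finitely many coordinates -/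
lemma integral_depends {μ : Measure (ℤ → ZMod d)} (hμ : IsUniformBernoulli d μ)
    (s : Finset ℤ) (G : (s → ZMod d) → ℂ) :
    ∫ x, G (fun i : s => x i) ∂μ
      = (((d:ℝ) ^ s.card)⁻¹ : ℝ) • ∑ w : s → ZMod d, G w := by
  classical
  haveI := hμ.1
  have hpt : (fun x : ℤ → ZMod d => G (fun i : s => x i))
      = fun x => ∑ w : s → ZMod d, Set.indicator (cyl d s (ext0 d s w)) (fun _ => G w) x := by
    funext x
    rw [Finset.sum_eq_single (fun i : s => x i)]
    · rw [Set.indicator_of_mem ((restr_mem_cyl_iff s _ x).2 rfl)]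
    · intro w _ hw
      rw [Set.indicator_of_notMem]
      intro hmem
      exact hw ((restr_mem_cyl_iff s w x).1 hmem).symm
    · intro h; exact absurd (Finset.mem_univ _) h
  rw [hpt, integral_finset_sum]
  · have hterm : ∀ w : s → ZMod d,
        ∫ x, Set.indicator (cyl d s (ext0 d s w)) (fun _ => G w) x ∂μ
          = (((d:ℝ) ^ s.card)⁻¹ : ℝ) • G w := by
      intro w
      rw [integral_indicator_const _ (measurableSet_cyl s _), measureReal_def, ub_cyl hμ]
      congr 1
      simp [ENNReal.toReal_inv]
    rw [Finset.sum_congr rfl (fun w _ => hterm w), ← Finset.smul_sum]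
  · intro w _
    exact (integrable_const (G w)).indicator (measurableSet_cyl s _)

/-- the characters -/
noncomputable def chi (d : ℕ) (c : ℤ →₀ ZMod d) (x : ℤ → ZMod d) : ℂ :=
  psi d (∑ i ∈ c.support, c i * x i)

lemma chi_zero (x : ℤ → ZMod d) : chi d 0 x = 1 := by
  simp [chi, psi_zero]

lemma chi_eq_sum_subset {c : ℤ →₀ ZMod d} {s : Finset ℤ} (hs : c.support ⊆ s)
    (x : ℤ → ZMod d) : chi d c x = psi d (∑ i ∈ s, c i * x i) := by
  rw [chi]
  congr 1
  refine Finset.sum_subset hs ?_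
  intro i _ hi
  rw [Finsupp.notMem_support_iff.1 hi, zero_mul]

lemma chi_add (c c' : ℤ →₀ ZMod d) (x : ℤ → ZMod d) :
    chi d (c + c') x = chi d c x * chi d c' x := by
  classical
  have hsub : (c + c').support ⊆ c.support ∪ c'.support := Finsupp.support_add
  rw [chi_eq_sum_subset hsub, chi_eq_sum_subset (Finset.subset_union_left (s₂ := c'.support)),
    chi_eq_sum_subset (Finset.subset_union_right (s₁ := c.support)), ← psi_add]
  congr 1
  rw [← Finset.sum_add_distrib]
  refine Finset.sum_congr rfl fun i _ => ?_
  rw [Finsupp.add_apply, add_mul]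

lemma conj_chi (c : ℤ →₀ ZMod d) (x : ℤ → ZMod d) :
    (starRingEnd ℂ) (chi d c x) = chi d (-c) x := by
  rw [chi, conj_psi, chi, Finsupp.support_neg]
  congr 1
  rw [← Finset.sum_neg_distrib]
  refine Finset.sum_congr rfl fun i _ => ?_
  rw [Finsupp.neg_apply, neg_mul]

lemma chi_abs (c : ℤ →₀ ZMod d) (x : ℤ → ZMod d) : ‖chi d c x‖ = 1 := psi_abs _

lemma chi_factor (c : ℤ →₀ ZMod d) (x : ℤ → ZMod d) :
    chi d c x = psi d (∑ i ∈ c.support.attach, c i * x i) := by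
  rw [chi, ← Finset.sum_attach c.support (fun i => c i * x i)]

lemma measurable_chi (c : ℤ →₀ ZMod d) : Measurable (chi d c) := by
  have : chi d c = fun x => (fun w : (c.support → ZMod d) =>
      psi d (∑ i ∈ c.support.attach, c i * w i)) (fun i : c.support => x i) := by
    funext x; rw [chi_factor]
  rw [this]
  exact measurable_depends (β := ℂ) c.support
    (fun w => psi d (∑ i ∈ c.support.attach, c ↑i * w i))

lemma integrable_bdd {μ : Measure (ℤ → ZMod d)} [IsProbabilityMeasure μ]
    {f : (ℤ → ZMod d) → ℂ} (hf : Measurable f) (C : ℝ) (h : ∀ x, ‖f x‖ ≤ C) :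
    Integrable f μ :=
  (integrable_const C).mono' hf.aestronglyMeasurable (Filter.Eventually.of_forall h)

lemma integrable_chi {μ : Measure (ℤ → ZMod d)} [IsProbabilityMeasure μ] (c : ℤ →₀ ZMod d) :
    Integrable (chi d c) μ :=
  integrable_bdd (measurable_chi c) 1 (fun x => le_of_eq (chi_abs c x))

lemma integral_chi {μ : Measure (ℤ → ZMod d)} (hμ : IsUniformBernoulli d μ) (c : ℤ →₀ ZMod d) :
    ∫ x, chi d c x ∂μ = if c = 0 then 1 else 0 := by
  classical
  haveI := hμ.1
  have hfac : (fun x : ℤ → ZMod d => chi d c x) = fun x => (fun w : (c.support → ZMod d) =>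
      psi d (∑ i ∈ c.support.attach, c i * w i)) (fun i : c.support => x i) := by
    funext x; rw [chi_factor]
  rw [hfac, integral_depends hμ c.support
    (fun w => psi d (∑ i ∈ c.support.attach, c ↑i * w i))]
  have hsum : ∑ w : (c.support → ZMod d), psi d (∑ i ∈ c.support.attach, c i * w i)
      = ∏ i : c.support, ∑ t : ZMod d, psi d ((c i) * t) := by
    rw [Finset.prod_univ_sum]
    rw [Fintype.piFinset_univ]
    refine Finset.sum_congr rfl fun w _ => ?_
    rw [psi_sum]
    rw [← Finset.attach_eq_univ]  -- may need fixing
  rw [hsum]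
  by_cases hc : c = 0
  · subst hc; simp
  · rw [if_neg hc]
    have hne : (Finset.univ : Finset c.support).Nonempty := by
      rw [Finset.univ_nonempty_iff]
      have := Finsupp.support_nonempty_iff.2 hc
      exact Finset.Nonempty.to_subtype this
    obtain ⟨i, _⟩ := hne
    rw [Finset.prod_eq_zero (Finset.mem_univ i)]
    · simp
    · rw [sum_psi_mul_ite, if_neg (Finsupp.mem_support_iff.1 i.2)]

section FmapSec
variable (l r : ℤ) (lam : ℤ → ZMod d)

/-- the dual (adjoint) map on finitely supported coefficient vectors -/
noncomputable def Fmap (c : ℤ →₀ ZMod d) : ℤ →₀ ZMod d :=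
  ∑ j ∈ Finset.Icc l r, lam j • c.mapDomain (fun k => k + j)

lemma pair_eq_chi (c : ℤ →₀ ZMod d) (x : ℤ → ZMod d) :
    chi d c x = psi d (Finsupp.linearCombination (ZMod d) x c) := by
  rw [chi, Finsupp.linearCombination_apply, Finsupp.sum]
  congr 1

lemma Fmap_pair (c : ℤ →₀ ZMod d) (x : ℤ → ZMod d) :
    Finsupp.linearCombination (ZMod d) x (Fmap l r lam c)
      = Finsupp.linearCombination (ZMod d) (cellAuto d l r lam x) c := by
  rw [Fmap, map_sum]
  have hterm : ∀ j, Finsupp.linearCombination (ZMod d) x (lam j • c.mapDomain (fun k => k + j))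
      = lam j * ∑ i ∈ c.support, c i * x (i + j) := by
    intro j
    rw [_root_.map_smul, Finsupp.linearCombination_mapDomain, smul_eq_mul]
    rw [Finsupp.linearCombination_apply, Finsupp.sum]
    rw [Finset.mul_sum, Finset.mul_sum]
    refine Finset.sum_congr rfl fun i _ => ?_
    show lam j * (c i • (x ∘ fun k => k + j) i) = lam j * (c i * x (i + j))
    simp [smul_eq_mul]
  rw [Finset.sum_congr rfl (fun j _ => hterm j)]
  rw [Finsupp.linearCombination_apply, Finsupp.sum]
  have : ∀ a ∈ c.support, c a • cellAuto d l r lam x a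
      = ∑ j ∈ Finset.Icc l r, c a * (lam j * x (a + j)) := by
    intro a _
    rw [smul_eq_mul, cellAuto, Finset.mul_sum]
  rw [Finset.sum_congr rfl this, Finset.sum_comm]
  refine Finset.sum_congr rfl fun j _ => ?_
  rw [Finset.mul_sum]
  refine Finset.sum_congr rfl fun i _ => ?_
  ring

lemma chi_cellAuto (c : ℤ →₀ ZMod d) (x : ℤ → ZMod d) :
    chi d (Fmap l r lam c) x = chi d c (cellAuto d l r lam x) := by
  rw [pair_eq_chi, pair_eq_chi, Fmap_pair]

lemma Fmap_apply (c : ℤ →₀ ZMod d) (k : ℤ) :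
    Fmap l r lam c k = ∑ j ∈ Finset.Icc l r, lam j * c (k - j) := by
  rw [Fmap, Finset.sum_apply']
  refine Finset.sum_congr rfl fun j _ => ?_
  rw [Finsupp.smul_apply, smul_eq_mul]
  congr 1
  have hinj : Function.Injective (fun k : ℤ => k + j) := fun a b h => by simpa using h
  have := Finsupp.mapDomain_apply hinj c (k - j)
  simpa using this

lemma Fmap_zero : Fmap l r lam (0 : ℤ →₀ ZMod d) = 0 := by
  ext k
  rw [Fmap_apply]
  simp

end FmapSec

/-- characters separate coefficient vectors -/
lemma chi_injective : Function.Injective (chi d) := by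
  intro c c' h
  ext i
  have hx := congrFun h (fun k => if k = i then (1 : ZMod d) else 0)
  have heval : ∀ b : ℤ →₀ ZMod d,
      chi d b (fun k => if k = i then (1 : ZMod d) else 0) = psi d (b i) := by
    intro b
    rw [chi]
    congr 1
    have : ∀ j ∈ b.support, b j * (if j = i then (1:ZMod d) else 0)
        = if j = i then b j else 0 := by
      intro j _; split_ifs <;> simp
    rw [Finset.sum_congr rfl this, Finset.sum_ite_eq' b.support i (fun j => b j)]
    split_ifs with hmem
    · rfl
    · exact (Finsupp.notMem_support_iff.1 hmem).symm
  rw [heval, heval] at hx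
  exact psi_injective hx

lemma Fmap_injective {l r : ℤ} {lam : ℤ → ZMod d}
    (hsurj : Function.Surjective (cellAuto d l r lam)) :
    Function.Injective (Fmap l r lam) := by
  intro c c' h
  apply chi_injective
  funext x
  obtain ⟨y, rfl⟩ := hsurj x
  rw [← chi_cellAuto, ← chi_cellAuto, h]

lemma measurable_cellAuto (l r : ℤ) (lam : ℤ → ZMod d) :
    Measurable (cellAuto d l r lam) := by
  apply measurable_pi_lambda
  intro i
  set W : Finset ℤ := Finset.image (fun j => i + j) (Finset.Icc l r) with hW
  have hmem : ∀ j : (Finset.Icc l r : Finset ℤ), (i + (j : ℤ)) ∈ W :=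
    fun j => Finset.mem_image_of_mem _ j.2
  have : (fun x : ℤ → ZMod d => cellAuto d l r lam x i)
      = fun x => (fun w : (W → ZMod d) =>
          ∑ j ∈ (Finset.Icc l r).attach, lam j * w ⟨i + j, hmem j⟩) (fun k : W => x k) := by
    funext x
    rw [cellAuto, ← Finset.sum_attach (Finset.Icc l r) (fun j => lam j * x (i + j))]
  rw [this]
  exact measurable_depends (β := ZMod d) W
    (fun w => ∑ j ∈ (Finset.Icc l r).attach, lam j * w ⟨i + j, hmem j⟩)

/-- a surjective linear CA preserves the uniform Bernoulli measure -/
lemma map_cellAuto {μ : Measure (ℤ → ZMod d)} (hμ : IsUniformBernoulli d μ)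
    {l r : ℤ} {lam : ℤ → ZMod d} (hsurj : Function.Surjective (cellAuto d l r lam)) :
    μ.map (cellAuto d l r lam) = μ := by
  classical
  haveI := hμ.1
  haveI : IsProbabilityMeasure (μ.map (cellAuto d l r lam)) :=
    Measure.isProbabilityMeasure_map (measurable_cellAuto l r lam).aemeasurable
  apply measure_eq_of_cyl
  · simp [measure_univ]
  · intro s a
    rw [Measure.map_apply (measurable_cellAuto l r lam) (measurableSet_cyl s a)]
    set W : Finset ℤ := Finset.image (fun p : ℤ × ℤ => p.1 + p.2) (s ×ˢ Finset.Icc l r) with hW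
    have hmem : ∀ (i : s) (j : (Finset.Icc l r : Finset ℤ)), ((i : ℤ) + (j : ℤ)) ∈ W := by
      intro i j
      exact Finset.mem_image.2 ⟨((i : ℤ), (j : ℤ)), Finset.mem_product.2 ⟨i.2, j.2⟩, rfl⟩
    set L : ((k : W) → ZMod d) →+ ((i : s) → ZMod d) :=
      { toFun := fun w i => ∑ j ∈ (Finset.Icc l r).attach, lam j * w ⟨(i : ℤ) + j, hmem i j⟩
        map_zero' := by funext i; simp
        map_add' := by
          intro w w'; funext i
          simp only [Pi.add_apply, mul_add, Finset.sum_add_distrib] } with hL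
    have hTW : ∀ x : ℤ → ZMod d,
        (fun i : s => cellAuto d l r lam x i) = L (fun k : W => x k) := by
      intro x
      funext i
      show cellAuto d l r lam x i = _
      rw [cellAuto]
      rw [← Finset.sum_attach (Finset.Icc l r) (fun j => lam j * x ((i:ℤ) + j))]
      rfl
    have hpre : cellAuto d l r lam ⁻¹' (cyl d s a)
        = {x | L (fun k : W => x k) = fun i : s => a i} := by
      ext x
      simp only [Set.mem_preimage, cyl, Set.mem_setOf_eq]
      rw [← hTW x]
      constructor
      · intro h; funext i; exact h i i.2
      · intro h i hi; exact congrFun h ⟨i, hi⟩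
    have hLsurj : Function.Surjective L := by
      intro b
      obtain ⟨x, hx⟩ := hsurj (ext0 d s b)
      refine ⟨fun k : W => x k, ?_⟩
      rw [← hTW x]
      funext i
      rw [hx]
      simp [ext0, i.2]
    rw [hpre, meas_preimage_addHom hμ W L hLsurj _, ub_cyl hμ]
    rw [Fintype.card_fun, ZMod.card, Fintype.card_coe, Nat.cast_pow]

section Red
variable {m : ℕ} [NeZero m] (h : d ∣ m)

/-- coordinatewise reduction of configurations -/
def piRed (h : d ∣ m) : (ℤ → ZMod m) → (ℤ → ZMod d) :=
  fun x i => ZMod.castHom h (ZMod d) (x i)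

lemma castHom_surj : Function.Surjective (ZMod.castHom h (ZMod d)) := by
  intro a
  refine ⟨((a.val : ℕ) : ZMod m), ?_⟩
  rw [map_natCast, ZMod.natCast_val, ZMod.cast_id]

lemma piRed_surjective : Function.Surjective (piRed h) := by
  intro y
  refine ⟨fun i => ((( y i).val : ℕ) : ZMod m), ?_⟩
  funext i
  rw [piRed, map_natCast, ZMod.natCast_val, ZMod.cast_id]

lemma measurable_piRed : Measurable (piRed h) := by
  apply measurable_pi_lambda
  intro i
  exact (measurable_of_countable _).comp (measurable_pi_apply i)

lemma piRed_cellAuto (l r : ℤ) (lam : ℤ → ZMod m) (x : ℤ → ZMod m) :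
    piRed h (cellAuto m l r lam x)
      = cellAuto d l r (fun i => ZMod.castHom h (ZMod d) (lam i)) (piRed h x) := by
  funext i
  rw [piRed, cellAuto, map_sum]
  refine Finset.sum_congr rfl fun j _ => ?_
  rw [map_mul]
  rfl

lemma cellAuto_red_surjective (l r : ℤ) (lam : ℤ → ZMod m)
    (hsurj : Function.Surjective (cellAuto m l r lam)) :
    Function.Surjective (cellAuto d l r (fun i => ZMod.castHom h (ZMod d) (lam i))) := by
  intro y
  obtain ⟨x, hx⟩ := piRed_surjective h y
  obtain ⟨z, hz⟩ := hsurj x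
  exact ⟨piRed h z, by rw [← piRed_cellAuto, hz, hx]⟩

/-- pushforward of uniform Bernoulli under reduction is uniform Bernoulli -/
lemma isUB_map_piRed {μ : Measure (ℤ → ZMod m)} (hμ : IsUniformBernoulli m μ) :
    IsUniformBernoulli d (μ.map (piRed h)) := by
  classical
  haveI := hμ.1
  haveI : IsProbabilityMeasure (μ.map (piRed h)) :=
    Measure.isProbabilityMeasure_map (measurable_piRed h).aemeasurable
  refine ⟨inferInstance, ?_⟩
  intro s a
  have hset : {x : ℤ → ZMod d | ∀ i ∈ s, x i = a i} = cyl d s a := rfl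
  rw [hset, Measure.map_apply (measurable_piRed h) (measurableSet_cyl s a)]
  set L : ((i : s) → ZMod m) →+ ((i : s) → ZMod d) :=
    { toFun := fun w i => ZMod.castHom h (ZMod d) (w i)
      map_zero' := by funext i; simp
      map_add' := by
        intro w w'; funext i
        exact map_add (ZMod.castHom h (ZMod d)) (w i) (w' i) } with hL
  have hpre : piRed h ⁻¹' (cyl d s a) = {x | L (fun i : s => x i) = fun i : s => a i} := by
    ext x
    simp only [Set.mem_preimage, cyl, Set.mem_setOf_eq]
    constructor
    · intro hx; funext i; exact hx i i.2
    · intro hx i hi; exact congrFun hx ⟨i, hi⟩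
  have hLsurj : Function.Surjective L := by
    intro b
    refine ⟨fun i => (((b i).val : ℕ) : ZMod m), ?_⟩
    funext i
    show ZMod.castHom h (ZMod d) _ = b i
    rw [map_natCast, ZMod.natCast_val, ZMod.cast_id]
  rw [hpre, meas_preimage_addHom hμ s L hLsurj _]
  rw [Fintype.card_fun, ZMod.card, Fintype.card_coe, Nat.cast_pow, ENNReal.inv_pow]

/-- reduction on coefficient vectors -/
noncomputable def redF (h : d ∣ m) : (ℤ →₀ ZMod m) → (ℤ →₀ ZMod d) :=
  Finsupp.mapRange (ZMod.castHom h (ZMod d)) (map_zero _)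

lemma redF_Fmap (l r : ℤ) (lam : ℤ → ZMod m) (c : ℤ →₀ ZMod m) :
    redF h (Fmap l r lam c)
      = Fmap l r (fun i => ZMod.castHom h (ZMod d) (lam i)) (redF h c) := by
  ext k
  rw [redF, Finsupp.mapRange_apply, Fmap_apply, Fmap_apply, map_sum]
  refine Finset.sum_congr rfl fun j _ => ?_
  rw [map_mul, Finsupp.mapRange_apply]

lemma redF_iterate (l r : ℤ) (lam : ℤ → ZMod m) (c : ℤ →₀ ZMod m) (n : ℕ) :
    redF h ((Fmap l r lam)^[n] c)
      = (Fmap l r (fun i => ZMod.castHom h (ZMod d) (lam i)))^[n] (redF h c) := by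
  induction n with
  | zero => rfl
  | succ n ih =>
      rw [Function.iterate_succ_apply', Function.iterate_succ_apply', redF_Fmap, ih]

end Red
def NoPer (d : ℕ) (l r : ℤ) (lam : ℤ → ZMod d) : Prop :=
  ∀ c : ℤ →₀ ZMod d, c ≠ 0 → ∀ n : ℕ, 1 ≤ n → (Fmap l r lam)^[n] c ≠ c

lemma chi_iterate (l r : ℤ) (lam : ℤ → ZMod d) (c : ℤ →₀ ZMod d) (j : ℕ) (x : ℤ → ZMod d) :
    chi d ((Fmap l r lam)^[j + 1] c) x
      = chi d ((Fmap l r lam)^[j] c) (cellAuto d l r lam x) := by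
  rw [Function.iterate_succ_apply', chi_cellAuto]

theorem noPer_of_ergodic {μ : Measure (ℤ → ZMod d)} (hμ : IsUniformBernoulli d μ)
    (l r : ℤ) (lam : ℤ → ZMod d)
    (herg : IsErgodic (cellAuto d l r lam) μ) : NoPer d l r lam := by
  classical
  haveI := hμ.1
  intro c hc n hn heq
  set F := Fmap l r lam with hF
  set T := cellAuto d l r lam with hT
  set g : (ℤ → ZMod d) → ℂ := fun x => ∑ j ∈ Finset.range n, chi d (F^[j] c) x with hg
  have hgT : ∀ x, g (T x) = g x := by
    intro x
    have h1 : ∀ j, chi d (F^[j] c) (T x) = chi d (F^[j+1] c) x := by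
      intro j; rw [chi_iterate]
    calc g (T x) = ∑ j ∈ Finset.range n, chi d (F^[j+1] c) x := by
          rw [hg]; exact Finset.sum_congr rfl fun j _ => h1 j
      _ = ∑ j ∈ Finset.range (n + 1), chi d (F^[j] c) x - chi d (F^[0] c) x := by
          rw [Finset.sum_range_succ' (fun j => chi d (F^[j] c) x) n]; ring
      _ = ∑ j ∈ Finset.range n, chi d (F^[j] c) x + chi d (F^[n] c) x - chi d c x := by
          rw [Finset.sum_range_succ]; rfl
      _ = g x := by rw [heq, hg]; ring
  have hgmeas : Measurable g := by
    apply Finset.measurable_sum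
    intro j _
    exact measurable_chi _
  -- finite set of possible values
  set Vfin : Finset ℂ :=
    (Finset.univ : Finset (Fin n → ZMod d)).image (fun v => ∑ j : Fin n, psi d (v j)) with hV
  have hval : ∀ x, g x ∈ Vfin := by
    intro x
    have : g x = ∑ j : Fin n, psi d (∑ i ∈ (F^[(j:ℕ)] c).support, (F^[(j:ℕ)] c) i * x i) := by
      show (∑ j ∈ Finset.range n, chi d (F^[j] c) x) = _
      rw [← Fin.sum_univ_eq_sum_range (fun j => chi d (F^[j] c) x) n]
      rfl
    rw [this]
    exact Finset.mem_image.2 ⟨_, Finset.mem_univ _, rfl⟩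
  -- invariant level sets
  have hlev : ∀ z : ℂ, (cellAuto d l r lam) ⁻¹' (g ⁻¹' {z}) = g ⁻¹' {z} := by
    intro z
    ext x
    simp only [Set.mem_preimage, Set.mem_singleton_iff]
    rw [← hT, hgT x]
  have hmeaslev : ∀ z : ℂ, MeasurableSet (g ⁻¹' {z}) :=
    fun z => hgmeas (measurableSet_singleton z)
  have h01 : ∀ z : ℂ, μ (g ⁻¹' {z}) = 0 ∨ μ (g ⁻¹' {z}) = 1 :=
    fun z => herg _ (hmeaslev z) (hlev z)
  have hcover : (⋃ z ∈ Vfin, g ⁻¹' {z}) = Set.univ := by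
    ext x
    simp only [Set.mem_iUnion, Set.mem_univ, iff_true, Set.mem_preimage,
      Set.mem_singleton_iff]
    exact ⟨g x, hval x, rfl⟩
  have hex : ∃ z ∈ Vfin, μ (g ⁻¹' {z}) = 1 := by
    by_contra hno
    push_neg at hno
    have hzero : ∀ z ∈ Vfin, μ (g ⁻¹' {z}) = 0 := by
      intro z hz
      rcases h01 z with h | h
      · exact h
      · exact absurd h (hno z hz)
    have : μ Set.univ ≤ ∑ z ∈ Vfin, μ (g ⁻¹' {z}) := by
      rw [← hcover]; exact measure_biUnion_finset_le Vfin _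
    rw [Finset.sum_congr rfl hzero, Finset.sum_const, measure_univ] at this
    simp at this
  obtain ⟨z₀, _, hz₀⟩ := hex
  have hae : g =ᵐ[μ] fun _ => z₀ := by
    have : μ ({x | g x = z₀}ᶜ) = 0 := by
      have hco : ({x | g x = z₀}ᶜ : Set (ℤ → ZMod d)) = (g ⁻¹' {z₀})ᶜ := rfl
      rw [hco, measure_compl (hmeaslev z₀) (measure_ne_top μ _), hz₀, measure_univ, tsub_self]
    exact (MeasureTheory.ae_iff).2 this
  -- two evaluations of ∫ g · chi (-c)
  have hpt : ∀ x, g x * chi d (-c) x = ∑ j ∈ Finset.range n, chi d (F^[j] c + -c) x := by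
    intro x
    rw [hg, Finset.sum_mul]
    exact Finset.sum_congr rfl fun j _ => (chi_add _ _ x).symm
  have hI1 : ∫ x, g x * chi d (-c) x ∂μ
      = ((Finset.range n).filter (fun j => F^[j] c + -c = 0)).card := by
    rw [MeasureTheory.integral_congr_ae (Filter.Eventually.of_forall hpt),
      integral_finset_sum _ (fun j _ => integrable_chi _)]
    rw [Finset.sum_congr rfl (fun j _ => integral_chi hμ (F^[j] c + -c)), Finset.sum_boole]
  have hI2 : ∫ x, g x * chi d (-c) x ∂μ = 0 := by
    have hae2 : (fun x => g x * chi d (-c) x) =ᵐ[μ] fun x => z₀ * chi d (-c) x :=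
      hae.mono fun x hx => by dsimp only; rw [hx]
    rw [MeasureTheory.integral_congr_ae hae2, integral_const_mul, integral_chi hμ,
      if_neg (by simpa using hc), mul_zero]
  rw [hI2] at hI1
  have hmem : 0 ∈ (Finset.range n).filter (fun j => F^[j] c + -c = 0) := by
    refine Finset.mem_filter.2 ⟨Finset.mem_range.2 (by omega), ?_⟩
    simp
  have hcard : ((Finset.range n).filter (fun j => F^[j] c + -c = 0)).card ≠ 0 :=
    Finset.card_ne_zero_of_mem hmem
  exact hcard (by exact_mod_cast hI1.symm)

lemma Fmap_neg (l r : ℤ) (lam : ℤ → ZMod d) (c : ℤ →₀ ZMod d) :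
    Fmap l r lam (-c) = -(Fmap l r lam c) := by
  ext k
  rw [Finsupp.neg_apply, Fmap_apply, Fmap_apply, ← Finset.sum_neg_distrib]
  refine Finset.sum_congr rfl fun j _ => ?_
  rw [Finsupp.neg_apply, mul_neg]

lemma Fmap_iterate_neg (l r : ℤ) (lam : ℤ → ZMod d) (c : ℤ →₀ ZMod d) (k : ℕ) :
    (Fmap l r lam)^[k] (-c) = -((Fmap l r lam)^[k] c) := by
  induction k with
  | zero => rfl
  | succ k ih => rw [Function.iterate_succ_apply', Function.iterate_succ_apply', ih, Fmap_neg]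


theorem ergodic_of_noPer {μ : Measure (ℤ → ZMod d)} (hμ : IsUniformBernoulli d μ)
    (l r : ℤ) (lam : ℤ → ZMod d)
    (hsurj : Function.Surjective (cellAuto d l r lam))
    (hnp : NoPer d l r lam) : IsErgodic (cellAuto d l r lam) μ := by
  classical
  haveI := hμ.1
  intro A hA hinv
  set f : (ℤ → ZMod d) → ℂ := A.indicator (fun _ => 1) with hf
  have hfmeas : Measurable f := measurable_const.indicator hA
  have hfval : ∀ x, f x = if x ∈ A then 1 else 0 := fun x => Set.indicator_apply _ _ _
  have hfbdd : ∀ x, ‖f x‖ ≤ 1 := by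
    intro x; rw [hfval]; split_ifs <;> simp
  have hint : ∀ c, Integrable (fun x => f x * chi d c x) μ := by
    intro c
    refine integrable_bdd (hfmeas.mul (measurable_chi c)) 1 fun x => ?_
    rw [norm_mul]
    calc ‖f x‖ * ‖chi d c x‖ = ‖f x‖ * 1 := by
          rw [chi_abs]
      _ ≤ 1 := by rw [mul_one]; exact hfbdd x
  set a : (ℤ →₀ ZMod d) → ℂ := fun c => ∫ x, f x * chi d c x ∂μ with ha
  have hfT : ∀ x, f (cellAuto d l r lam x) = f x := by
    intro x
    have hmem : cellAuto d l r lam x ∈ A ↔ x ∈ A := by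
      conv_rhs => rw [← hinv]
      exact Iff.rfl
    rw [hfval, hfval, if_congr hmem rfl rfl]
  have ha_step : ∀ c, a (Fmap l r lam c) = a c := by
    intro c
    have h1 : ∫ y, f y * chi d c y ∂(μ.map (cellAuto d l r lam))
        = ∫ x, f (cellAuto d l r lam x) * chi d c (cellAuto d l r lam x) ∂μ :=
      integral_map (measurable_cellAuto l r lam).aemeasurable
        ((hfmeas.mul (measurable_chi c)).aestronglyMeasurable)
    rw [map_cellAuto hμ hsurj] at h1
    show (∫ x, f x * chi d (Fmap l r lam c) x ∂μ) = ∫ x, f x * chi d c x ∂μ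
    calc (∫ x, f x * chi d (Fmap l r lam c) x ∂μ)
        = ∫ x, f (cellAuto d l r lam x) * chi d c (cellAuto d l r lam x) ∂μ := by
          refine integral_congr_ae (Filter.Eventually.of_forall fun x => ?_)
          dsimp only
          rw [hfT x, chi_cellAuto]
      _ = ∫ x, f x * chi d c x ∂μ := h1.symm
  have ha_iter : ∀ (c : ℤ →₀ ZMod d) (k : ℕ), a ((Fmap l r lam)^[k] c) = a c := by
    intro c k
    induction k with
    | zero => rfl
    | succ k ih => rw [Function.iterate_succ_apply', ha_step, ih]
  have hFinj : Function.Injective (Fmap l r lam) := Fmap_injective hsurj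
  have hdist : ∀ c : ℤ →₀ ZMod d, c ≠ 0 → ∀ i j : ℕ,
      (Fmap l r lam)^[i] c = (Fmap l r lam)^[j] c → i = j := by
    have key : ∀ c : ℤ →₀ ZMod d, c ≠ 0 → ∀ i j : ℕ, i < j →
        (Fmap l r lam)^[i] c ≠ (Fmap l r lam)^[j] c := by
      intro c hc i j hij heq
      have h2 : (Fmap l r lam)^[i] ((Fmap l r lam)^[j - i] c) = (Fmap l r lam)^[i] c := by
        rw [← Function.iterate_add_apply, show i + (j - i) = j by omega]
        exact heq.symm
      have h3 : (Fmap l r lam)^[j-i] c = c := Function.Injective.iterate hFinj i h2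
      exact hnp c hc (j - i) (by omega) h3
    intro c hc i j heq
    rcases Nat.lt_trichotomy i j with h | h | h
    · exact absurd heq (key c hc i j h)
    · exact h
    · exact absurd heq.symm (key c hc j i h)
  have hconj_f : ∀ x, (starRingEnd ℂ) (f x) = f x := by
    intro x; rw [hfval]; split_ifs <;> simp
  have hconj_a : ∀ c, a (-c) = (starRingEnd ℂ) (a c) := by
    intro c
    show (∫ x, f x * chi d (-c) x ∂μ) = (starRingEnd ℂ) (∫ x, f x * chi d c x ∂μ)
    rw [← integral_conj]
    refine integral_congr_ae (Filter.Eventually.of_forall fun x => ?_)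
    dsimp only
    rw [map_mul, hconj_f, conj_chi]
  -- Bessel inequality
  have hvanish : ∀ c : ℤ →₀ ZMod d, c ≠ 0 → a c = 0 := by
    intro c hc
    have key : ∀ N : ℕ, (N : ℝ) * Complex.normSq (a c) ≤ 1 := by
      intro N
      set t := a c with ht
      set S := Finset.range N with hS
      set u : (ℤ → ZMod d) → ℂ :=
        fun x => f x - ∑ j ∈ S, t * chi d (-((Fmap l r lam)^[j] c)) x with hu
      have hconj_u : ∀ x, (starRingEnd ℂ) (u x)
          = f x - ∑ j ∈ S, (starRingEnd ℂ) t * chi d ((Fmap l r lam)^[j] c) x := by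
        intro x
        rw [hu]
        simp only [map_sub, map_sum, map_mul, hconj_f, conj_chi, neg_neg]
      have hff : ∀ x, f x * f x = f x := by
        intro x; rw [hfval]; split_ifs <;> simp
      have hexp : ∀ x, u x * (starRingEnd ℂ) (u x)
          = f x - (∑ j ∈ S, (starRingEnd ℂ) t * (f x * chi d ((Fmap l r lam)^[j] c) x))
            - (∑ j ∈ S, t * (f x * chi d (-((Fmap l r lam)^[j] c)) x))
            + ∑ j ∈ S, ∑ k ∈ S, (t * (starRingEnd ℂ) t)
                * chi d (-((Fmap l r lam)^[j] c) + (Fmap l r lam)^[k] c) x := by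
        intro x
        rw [hconj_u]
        have step1 : u x * (f x - ∑ j ∈ S, (starRingEnd ℂ) t * chi d ((Fmap l r lam)^[j] c) x)
            = f x * f x - f x * (∑ j ∈ S, (starRingEnd ℂ) t * chi d ((Fmap l r lam)^[j] c) x)
              - (∑ j ∈ S, t * chi d (-((Fmap l r lam)^[j] c)) x) * f x
              + (∑ j ∈ S, t * chi d (-((Fmap l r lam)^[j] c)) x)
                * (∑ j ∈ S, (starRingEnd ℂ) t * chi d ((Fmap l r lam)^[j] c) x) := by
          rw [hu]; ring
        rw [step1, hff]
        congr 1
        · congr 1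
          · congr 1
            rw [Finset.mul_sum]
            exact Finset.sum_congr rfl fun j _ => by ring
          · rw [Finset.sum_mul]
            exact Finset.sum_congr rfl fun j _ => by ring
        · rw [Finset.sum_mul_sum]
          refine Finset.sum_congr rfl fun j _ => Finset.sum_congr rfl fun k _ => ?_
          rw [chi_add]
          ring
      -- integrate
      have hIf : ∫ x, f x ∂μ = ((μ A).toReal : ℂ) := by
        rw [hf, integral_indicator_const (1 : ℂ) hA]
        simp [measureReal_def]
      have int1 : Integrable (fun x => ∑ j ∈ S,
          (starRingEnd ℂ) t * (f x * chi d ((Fmap l r lam)^[j] c) x)) μ :=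
        integrable_finset_sum _ (fun j _ => (hint _).const_mul _)
      have int2 : Integrable (fun x => ∑ j ∈ S,
          t * (f x * chi d (-((Fmap l r lam)^[j] c)) x)) μ :=
        integrable_finset_sum _ (fun j _ => (hint _).const_mul _)
      have int3 : Integrable (fun x => ∑ j ∈ S, ∑ k ∈ S, (t * (starRingEnd ℂ) t)
          * chi d (-((Fmap l r lam)^[j] c) + (Fmap l r lam)^[k] c) x) μ :=
        integrable_finset_sum _ (fun j _ => integrable_finset_sum _
          (fun k _ => (integrable_chi _).const_mul _))
      have hintf : Integrable f μ := integrable_bdd hfmeas 1 hfbdd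
      have hIu : ∫ x, u x * (starRingEnd ℂ) (u x) ∂μ
          = ((μ A).toReal : ℂ) - (N : ℂ) * ((starRingEnd ℂ) t * t) := by
        rw [integral_congr_ae (Filter.Eventually.of_forall hexp)]
        have int4 : Integrable (fun x => f x - ∑ j ∈ S,
            (starRingEnd ℂ) t * (f x * chi d ((Fmap l r lam)^[j] c) x)) μ := hintf.sub int1
        have int5 : Integrable (fun x => (f x - ∑ j ∈ S,
            (starRingEnd ℂ) t * (f x * chi d ((Fmap l r lam)^[j] c) x))
            - ∑ j ∈ S, t * (f x * chi d (-((Fmap l r lam)^[j] c)) x)) μ := int4.sub int2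
        rw [integral_add int5 int3, integral_sub int4 int2, integral_sub hintf int1,
          integral_finset_sum _ (fun j _ => (hint _).const_mul _),
          integral_finset_sum _ (fun j _ => (hint _).const_mul _),
          integral_finset_sum _ (fun j _ => integrable_finset_sum _
            (fun k _ => (integrable_chi _).const_mul _))]
        have e1 : ∀ j ∈ S, ∫ x, (starRingEnd ℂ) t * (f x * chi d ((Fmap l r lam)^[j] c) x) ∂μ
            = (starRingEnd ℂ) t * t := by
          intro j _
          rw [integral_const_mul]
          have : (∫ x, f x * chi d ((Fmap l r lam)^[j] c) x ∂μ) = a ((Fmap l r lam)^[j] c) := rfl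
          rw [this, ha_iter, ← ht]
        have e2 : ∀ j ∈ S, ∫ x, t * (f x * chi d (-((Fmap l r lam)^[j] c)) x) ∂μ
            = t * (starRingEnd ℂ) t := by
          intro j _
          rw [integral_const_mul]
          have h3 : -((Fmap l r lam)^[j] c) = (Fmap l r lam)^[j] (-c) :=
            (Fmap_iterate_neg l r lam c j).symm
          have : (∫ x, f x * chi d (-((Fmap l r lam)^[j] c)) x ∂μ)
              = a (-((Fmap l r lam)^[j] c)) := rfl
          rw [this, h3, ha_iter, hconj_a, ← ht]
        have e3 : ∀ j ∈ S, (∫ x, ∑ k ∈ S, (t * (starRingEnd ℂ) t)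
            * chi d (-((Fmap l r lam)^[j] c) + (Fmap l r lam)^[k] c) x ∂μ)
            = t * (starRingEnd ℂ) t := by
          intro j hj
          rw [integral_finset_sum _ (fun k _ => (integrable_chi _).const_mul _)]
          have e4 : ∀ k ∈ S, (∫ x, (t * (starRingEnd ℂ) t)
              * chi d (-((Fmap l r lam)^[j] c) + (Fmap l r lam)^[k] c) x ∂μ)
              = if k = j then t * (starRingEnd ℂ) t else 0 := by
            intro k _
            rw [integral_const_mul, integral_chi hμ]
            have hiff : (-((Fmap l r lam)^[j] c) + (Fmap l r lam)^[k] c = 0) ↔ (k = j) := by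
              rw [neg_add_eq_zero]
              constructor
              · intro h; exact (hdist c hc j k h).symm
              · rintro rfl; rfl
            rw [if_congr hiff rfl rfl]
            split_ifs <;> simp
          rw [Finset.sum_congr rfl e4, Finset.sum_ite_eq' S j (fun _ => t * (starRingEnd ℂ) t),
            if_pos hj]
        rw [hIf, Finset.sum_congr rfl e1, Finset.sum_congr rfl e2, Finset.sum_congr rfl e3]
        simp only [Finset.sum_const, hS, Finset.card_range, nsmul_eq_mul]
        push_cast
        ring
      have hre : ∫ x, u x * (starRingEnd ℂ) (u x) ∂μ
          = (((∫ x, Complex.normSq (u x) ∂μ) : ℝ) : ℂ) := by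
        have h1 : ∀ x, u x * (starRingEnd ℂ) (u x) = ((Complex.normSq (u x) : ℝ) : ℂ) :=
          fun x => Complex.mul_conj _
        rw [integral_congr_ae (Filter.Eventually.of_forall h1)]
        exact integral_ofReal
      have hnn : (0:ℝ) ≤ ∫ x, Complex.normSq (u x) ∂μ :=
        integral_nonneg fun x => Complex.normSq_nonneg _
      have hreal : (μ A).toReal - (N : ℝ) * Complex.normSq t
          = ∫ x, Complex.normSq (u x) ∂μ := by
        have hc2 : ((μ A).toReal : ℂ) - (N : ℂ) * ((starRingEnd ℂ) t * t)
            = (((∫ x, Complex.normSq (u x) ∂μ) : ℝ) : ℂ) := by rw [← hIu, hre]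
        have hc3 : (starRingEnd ℂ) t * t = ((Complex.normSq t : ℝ) : ℂ) := by
          rw [mul_comm, Complex.mul_conj]
        rw [hc3] at hc2
        exact_mod_cast hc2
      have hle1 : (μ A).toReal ≤ 1 := by
        have h4 : μ A ≤ 1 := prob_le_one
        have := ENNReal.toReal_mono (by simp) h4
        simpa using this
      linarith [hnn, hreal, hle1]
    by_contra htne
    have h0 : 0 < Complex.normSq (a c) := Complex.normSq_pos.2 htne
    obtain ⟨N, hN⟩ := exists_nat_gt (1 / Complex.normSq (a c))
    have hk := key N
    rw [div_lt_iff₀ h0] at hN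
    linarith
  -- independence of A from all cylinders
  have hdC : (d : ℂ) ≠ 0 := Nat.cast_ne_zero.2 (NeZero.ne d)
  have hind : ∀ (s : Finset ℤ) (aa : ℤ → ZMod d),
      μ (A ∩ cyl d s aa) = μ A * μ (cyl d s aa) := by
    intro s aa
    -- the Finsupp associated to γ
    set cg : (s → ZMod d) → (ℤ →₀ ZMod d) :=
      fun γ => ∑ i : s, Finsupp.single (i : ℤ) (γ i) with hcg
    have hcg_apply : ∀ (γ : s → ZMod d) (i : s), cg γ (i : ℤ) = γ i := by
      intro γ i
      rw [hcg]
      rw [Finsupp.finset_sum_apply]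
      have : ∀ i' : s, (Finsupp.single (i' : ℤ) (γ i')) (i : ℤ)
          = if i' = i then γ i' else 0 := by
        intro i'
        rw [Finsupp.single_apply]
        congr 1
        exact propext Subtype.ext_iff.symm
      rw [Finset.sum_congr rfl (fun i' _ => this i'), Finset.sum_ite_eq' Finset.univ i
        (fun i' => γ i'), if_pos (Finset.mem_univ i)]
    have hcg_zero : cg 0 = 0 := by
      rw [hcg]; simp
    have hcg_ne : ∀ γ : s → ZMod d, γ ≠ 0 → cg γ ≠ 0 := by
      intro γ hγ hcg0
      apply hγ
      funext i
      have := hcg_apply γ i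
      rw [hcg0] at this
      simpa using this.symm
    have hchig : ∀ (γ : s → ZMod d) (x : ℤ → ZMod d),
        chi d (cg γ) x = ∏ i : s, psi d (γ i * x i) := by
      intro γ x
      rw [pair_eq_chi, hcg, map_sum]
      rw [show (∑ i : s, (Finsupp.linearCombination (ZMod d) x) (Finsupp.single (i:ℤ) (γ i)))
          = ∑ i : s, γ i * x i from Finset.sum_congr rfl fun i _ => by
            rw [Finsupp.linearCombination_single, smul_eq_mul], psi_sum]
    -- pointwise identity
    have hpt : ∀ x, f x * Set.indicator (cyl d s aa) (fun _ => (1:ℂ)) x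
        = (((d:ℂ))⁻¹) ^ s.card
          * ∑ γ : s → ZMod d, (∏ i : s, psi d (-(γ i * aa i))) * (f x * chi d (cg γ) x) := by
      intro x
      have hcylpt : Set.indicator (cyl d s aa) (fun _ => (1:ℂ)) x
          = ∏ i ∈ s, (if x i - aa i = 0 then (1:ℂ) else 0) := by
        rw [Set.indicator_apply]
        split_ifs with hx
        · rw [eq_comm]
          refine Finset.prod_eq_one fun i hi => ?_
          rw [if_pos (by rw [sub_eq_zero]; exact hx i hi)]
        · have hex : ∃ i ∈ s, x i ≠ aa i := by
            by_contra hall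
            push_neg at hall
            exact hx hall
          obtain ⟨i, hi, hne⟩ := hex
          rw [eq_comm]
          exact Finset.prod_eq_zero hi (by rw [if_neg (sub_ne_zero.2 hne)])
      have hphi : ∀ i ∈ s, (if x i - aa i = 0 then (1:ℂ) else 0)
          = (d:ℂ)⁻¹ * ∑ tt : ZMod d, psi d ((x i - aa i) * tt) := by
        intro i _
        rw [sum_psi_mul_ite]
        split_ifs with h
        · rw [inv_mul_cancel₀ hdC]
        · rw [mul_zero]
      have hind_exp : Set.indicator (cyl d s aa) (fun _ => (1:ℂ)) x
          = (((d:ℂ))⁻¹) ^ s.card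
            * ∑ γ : s → ZMod d, ∏ i : s, psi d ((x i - aa i) * γ i) := by
        rw [hcylpt, Finset.prod_congr rfl hphi, Finset.prod_mul_distrib, Finset.prod_const]
        rw [← Finset.prod_attach s (fun i => ∑ tt : ZMod d, psi d ((x i - aa i) * tt))]
        rw [Finset.attach_eq_univ, Finset.prod_univ_sum, Fintype.piFinset_univ]
      rw [hind_exp]
      have hPγ : ∀ γ : s → ZMod d, (∏ i : s, psi d ((x i - aa i) * γ i))
          = chi d (cg γ) x * ∏ i : s, psi d (-(γ i * aa i)) := by
        intro γ
        have hterm : ∀ i : s, psi d ((x i - aa i) * γ i)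
            = psi d (γ i * x i) * psi d (-(γ i * aa i)) := by
          intro i
          rw [← psi_add]
          congr 1
          ring
        rw [Finset.prod_congr rfl (fun i _ => hterm i), Finset.prod_mul_distrib, ← hchig γ x]
      calc f x * ((((d:ℂ))⁻¹) ^ s.card * ∑ γ : s → ZMod d, ∏ i : s, psi d ((x i - aa i) * γ i))
          = (((d:ℂ))⁻¹) ^ s.card * ∑ γ : s → ZMod d,
              f x * ∏ i : s, psi d ((x i - aa i) * γ i) := by
            rw [← Finset.mul_sum]; ring
        _ = (((d:ℂ))⁻¹) ^ s.card * ∑ γ : s → ZMod d,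
              (∏ i : s, psi d (-(γ i * aa i))) * (f x * chi d (cg γ) x) := by
            congr 1
            refine Finset.sum_congr rfl fun γ _ => ?_
            rw [hPγ γ]
            ring
    -- integrate the pointwise identity
    have hmeascyl := measurableSet_cyl (d := d) s aa
    have hLHS : ∫ x, f x * Set.indicator (cyl d s aa) (fun _ => (1:ℂ)) x ∂μ
        = ((μ (A ∩ cyl d s aa)).toReal : ℂ) := by
      have hptind : ∀ x, f x * Set.indicator (cyl d s aa) (fun _ => (1:ℂ)) x
          = Set.indicator (A ∩ cyl d s aa) (fun _ => (1:ℂ)) x := by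
        intro x
        rw [hfval, Set.indicator_apply, Set.indicator_apply]
        by_cases h1 : x ∈ A <;> by_cases h2 : x ∈ cyl d s aa <;>
          simp [h1, h2, Set.mem_inter_iff]
      rw [integral_congr_ae (Filter.Eventually.of_forall hptind),
        integral_indicator_const (1 : ℂ) (hA.inter hmeascyl)]
      simp [measureReal_def]
    have hRHS : ∫ x, f x * Set.indicator (cyl d s aa) (fun _ => (1:ℂ)) x ∂μ
        = (((d:ℂ))⁻¹) ^ s.card * ((μ A).toReal : ℂ) := by
      rw [integral_congr_ae (Filter.Eventually.of_forall hpt), integral_const_mul]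
      congr 1
      rw [integral_finset_sum _ (fun γ _ => (hint (cg γ)).const_mul _)]
      have hterm : ∀ γ : s → ZMod d, γ ∈ (Finset.univ : Finset (s → ZMod d)) →
          (∫ x, (∏ i : s, psi d (-(γ i * aa i))) * (f x * chi d (cg γ) x) ∂μ)
          = if γ = 0 then ((μ A).toReal : ℂ) else 0 := by
        intro γ _
        rw [integral_const_mul]
        by_cases hγ : γ = 0
        · subst hγ
          rw [if_pos rfl]
          have h5 : ∀ i : s, -( (0 : s → ZMod d) i * aa i) = 0 := by intro i; simp
          rw [show (∏ i : s, psi d (-((0 : s → ZMod d) i * aa i))) = 1 from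
            Finset.prod_eq_one fun i _ => by rw [h5 i, psi_zero]]
          rw [hcg_zero, one_mul]
          have : (∫ x, f x * chi d 0 x ∂μ) = ∫ x, f x ∂μ :=
            integral_congr_ae (Filter.Eventually.of_forall fun x => by
              dsimp only; rw [chi_zero, mul_one])
          rw [this]
          rw [hf, integral_indicator_const (1 : ℂ) hA]
          simp [measureReal_def]
        · rw [if_neg hγ]
          have : (∫ x, f x * chi d (cg γ) x ∂μ) = 0 := hvanish (cg γ) (hcg_ne γ hγ)
          rw [this, mul_zero]
      rw [Finset.sum_congr rfl hterm, Finset.sum_ite_eq' Finset.univ 0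
        (fun _ => ((μ A).toReal : ℂ)), if_pos (Finset.mem_univ 0)]
    -- deduce the ENNReal statement
    have hcylval := ub_cyl hμ s aa
    have htoReal : (μ (A ∩ cyl d s aa)).toReal = (μ A).toReal * (μ (cyl d s aa)).toReal := by
      have h6 : ((μ (A ∩ cyl d s aa)).toReal : ℂ)
          = (((d:ℂ))⁻¹) ^ s.card * ((μ A).toReal : ℂ) := by rw [← hLHS, hRHS]
      have h7 : (μ (cyl d s aa)).toReal = (((d:ℝ)) ^ s.card)⁻¹ := by
        rw [hcylval]
        simp [ENNReal.toReal_inv]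
      rw [h7]
      have h8 : (((d:ℂ))⁻¹) ^ s.card = ((((((d:ℝ)) ^ s.card)⁻¹ : ℝ)) : ℂ) := by
        push_cast
        rw [inv_pow]
      rw [h8] at h6
      have h6' : (μ (A ∩ cyl d s aa)).toReal = (((d:ℝ)) ^ s.card)⁻¹ * (μ A).toReal := by
        exact_mod_cast h6
      rw [h6', mul_comm]
    refine (ENNReal.toReal_eq_toReal_iff' (measure_ne_top μ _) ?_).1 ?_
    · exact ENNReal.mul_ne_top (measure_ne_top μ _) (measure_ne_top μ _)
    · rw [ENNReal.toReal_mul]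
      exact htoReal
  -- conclude via uniqueness of measures
  have hresteq : μ.restrict A = (μ A) • μ := by
    haveI : IsFiniteMeasure (μ.restrict A) := inferInstance
    apply measure_eq_of_cyl
    · rw [Measure.restrict_apply_univ, Measure.smul_apply, measure_univ, smul_eq_mul, mul_one]
    · intro s aa
      rw [Measure.restrict_apply (measurableSet_cyl s aa), Set.inter_comm,
        Measure.smul_apply, smul_eq_mul]
      exact hind s aa
  have hAA : μ A = μ A * μ A := by
    have h9 : (μ.restrict A) A = ((μ A) • μ) A := by rw [hresteq]
    rw [Measure.restrict_apply hA, Set.inter_self, Measure.smul_apply, smul_eq_mul] at h9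
    exact h9
  -- μ A = 0 or 1
  have hfin : μ A ≠ ⊤ := measure_ne_top μ A
  rcases eq_or_ne (μ A) 0 with h0 | h0
  · exact Or.inl h0
  · right
    have h1 : (μ A).toReal = (μ A).toReal * (μ A).toReal := by
      conv_lhs => rw [hAA]
      rw [ENNReal.toReal_mul]
    have h2 : (μ A).toReal ≠ 0 := by
      intro h3
      rcases (ENNReal.toReal_eq_zero_iff _).1 h3 with h | h
      · exact h0 h
      · exact absurd h hfin
    have h4 : (μ A).toReal = 1 := by
      have h5 : (μ A).toReal * 1 = (μ A).toReal * (μ A).toReal := by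
        rw [mul_one]; exact h1
      exact (mul_left_cancel₀ h2 h5).symm
    refine (ENNReal.toReal_eq_toReal_iff' hfin ENNReal.one_ne_top).1 ?_
    rw [ENNReal.toReal_one]
    exact h4

lemma Fmap_iterate_zero (l r : ℤ) (lam : ℤ → ZMod d) (n : ℕ) :
    (Fmap l r lam)^[n] (0 : ℤ →₀ ZMod d) = 0 := by
  induction n with
  | zero => rfl
  | succ n ih => rw [Function.iterate_succ_apply', ih, Fmap_zero]

section CRT
variable {m : ℕ} [NeZero m]

lemma zmod_eq_zero_of_all (u : ZMod m)
    (h : ∀ p ∈ m.primeFactors,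
      ZMod.castHom (Nat.ordProj_dvd m p) (ZMod (p ^ m.factorization p)) u = 0) : u = 0 := by
  have hm0 : m ≠ 0 := NeZero.ne m
  have hdvd : ∀ p ∈ m.primeFactors, p ^ m.factorization p ∣ u.val := by
    intro p hp
    have hp' : p.Prime := Nat.prime_of_mem_primeFactors hp
    haveI : NeZero (p ^ m.factorization p) := ⟨pow_ne_zero _ hp'.ne_zero⟩
    have h1 := h p hp
    rw [ZMod.castHom_apply, ← ZMod.natCast_val] at h1
    exact (ZMod.natCast_eq_zero_iff _ _).1 h1
  have hmdvd : m ∣ u.val := by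
    rw [Nat.dvd_iff_prime_pow_dvd_dvd]
    intro p k hp hpk
    have hkle : k ≤ m.factorization p := (Nat.Prime.pow_dvd_iff_le_factorization hp hm0).1 hpk
    by_cases hpm : p ∣ m
    · have hmem : p ∈ m.primeFactors := Nat.mem_primeFactors.2 ⟨hp, hpm, hm0⟩
      exact dvd_trans (pow_dvd_pow p hkle) (hdvd p hmem)
    · have : m.factorization p = 0 := Nat.factorization_eq_zero_of_not_dvd hpm
      rw [this] at hkle
      interval_cases k
      simp
  have hval0 : u.val = 0 := Nat.eq_zero_of_dvd_of_lt hmdvd (ZMod.val_lt u)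
  exact (ZMod.val_eq_zero u).1 hval0

lemma finsupp_eq_zero_of_all (c : ℤ →₀ ZMod m)
    (h : ∀ p ∈ m.primeFactors, redF (Nat.ordProj_dvd m p) c = 0) : c = 0 := by
  ext k
  rw [Finsupp.coe_zero, Pi.zero_apply]
  apply zmod_eq_zero_of_all
  intro p hp
  have := congrFun (congrArg (fun c' : ℤ →₀ _ => (c' : ℤ → _)) (h p hp)) k
  simpa [redF, Finsupp.mapRange_apply] using this

lemma finsupp_eq_of_all (u v : ℤ →₀ ZMod m)
    (h : ∀ p ∈ m.primeFactors, redF (Nat.ordProj_dvd m p) u = redF (Nat.ordProj_dvd m p) v) :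
    u = v := by
  have h1 : u - v = 0 := by
    apply finsupp_eq_zero_of_all
    intro p hp
    ext k
    rw [redF, Finsupp.mapRange_apply, Finsupp.sub_apply, map_sub]
    have := congrFun (congrArg (fun c' : ℤ →₀ _ => (c' : ℤ → _)) (h p hp)) k
    simp only [redF, Finsupp.mapRange_apply] at this
    rw [this, sub_self, Finsupp.coe_zero, Pi.zero_apply]
  have := sub_eq_zero.1 h1
  exact this

/-- `NoPer` for all prime power factors implies `NoPer` for `m` -/
lemma noPer_of_forall_prime (l r : ℤ) (lam : ℤ → ZMod m)
    (h : ∀ p ∈ m.primeFactors,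
      NoPer (p ^ m.factorization p) l r
        (fun i => ZMod.castHom (Nat.ordProj_dvd m p) (ZMod (p ^ m.factorization p)) (lam i))) :
    NoPer m l r lam := by
  intro c hc n hn heq
  have hex : ∃ p ∈ m.primeFactors, redF (Nat.ordProj_dvd m p) c ≠ 0 := by
    by_contra hall
    push_neg at hall
    exact hc (finsupp_eq_zero_of_all c hall)
  obtain ⟨p, hp, hcp⟩ := hex
  haveI : NeZero (p ^ m.factorization p) :=
    ⟨pow_ne_zero _ (Nat.prime_of_mem_primeFactors hp).ne_zero⟩
  refine h p hp (redF (Nat.ordProj_dvd m p) c) hcp n hn ?_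
  rw [← redF_iterate, heq]

/-- `NoPer` for `m` implies `NoPer` for each prime power factor -/
lemma noPer_prime_of_noPer (l r : ℤ) (lam : ℤ → ZMod m) (hnp : NoPer m l r lam)
    (p : ℕ) (hp : p ∈ m.primeFactors) :
    NoPer (p ^ m.factorization p) l r
      (fun i => ZMod.castHom (Nat.ordProj_dvd m p) (ZMod (p ^ m.factorization p)) (lam i)) := by
  classical
  have hm0 : m ≠ 0 := NeZero.ne m
  have hpp : p.Prime := Nat.prime_of_mem_primeFactors hp
  set q : ℕ := p ^ m.factorization p with hq
  haveI : NeZero q := ⟨pow_ne_zero _ hpp.ne_zero⟩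
  set m' : ℕ := m / q with hm'
  have hco : Nat.Coprime q m' := (Nat.coprime_ordCompl hpp hm0).pow_left _
  obtain ⟨e, he1, he2⟩ := Nat.chineseRemainder hco 1 0
  intro c' hc' n hn heq
  -- lift c' to ZMod m
  set lft : ZMod q → ZMod m := fun a => ((e : ℕ) : ZMod m) * ((a.val : ℕ) : ZMod m) with hlft
  have hlft0 : lft 0 = 0 := by rw [hlft]; simp
  set ch : ℤ →₀ ZMod m := Finsupp.mapRange lft hlft0 c' with hch
  have hredp : redF (Nat.ordProj_dvd m p) ch = c' := by
    ext k
    rw [redF, Finsupp.mapRange_apply, hch, Finsupp.mapRange_apply, hlft]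
    rw [map_mul, map_natCast, map_natCast]
    have he1' : ((e : ℕ) : ZMod q) = 1 := by
      have := (ZMod.natCast_eq_natCast_iff _ _ _).2 he1
      simpa using this
    rw [show ((e : ℕ) : ZMod (p ^ m.factorization p)) = 1 from he1']
    rw [one_mul, ZMod.natCast_val, ZMod.cast_id]
  have hredq' : ∀ p' ∈ m.primeFactors, p' ≠ p →
      redF (Nat.ordProj_dvd m p') ch = 0 := by
    intro p' hp' hne
    have hpp' : p'.Prime := Nat.prime_of_mem_primeFactors hp'
    haveI : NeZero (p' ^ m.factorization p') := ⟨pow_ne_zero _ hpp'.ne_zero⟩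
    have hq'm' : p' ^ m.factorization p' ∣ m' := by
      have h1 : p' ^ m.factorization p' ∣ q * m' := by
        rw [hq, hm', Nat.ordProj_mul_ordCompl_eq_self]
        exact Nat.ordProj_dvd m p'
      refine (Nat.Coprime.dvd_of_dvd_mul_left ?_ h1)
      exact Nat.Coprime.pow _ _ ((Nat.coprime_primes hpp' hpp).2 hne)
    have hdvde : p' ^ m.factorization p' ∣ (e : ℕ) := by
      have hm'e : m' ∣ (e : ℕ) := (Nat.modEq_zero_iff_dvd).1 he2
      exact dvd_trans hq'm' hm'e
    ext k
    rw [redF, Finsupp.mapRange_apply, hch, Finsupp.mapRange_apply, hlft]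
    rw [map_mul, map_natCast]
    rw [show ((e : ℕ) : ZMod (p' ^ m.factorization p')) = 0 from
      (ZMod.natCast_eq_zero_iff _ _).2 hdvde]
    simp
  have hch0 : ch ≠ 0 := by
    intro h0
    apply hc'
    rw [← hredp, h0]
    ext k
    simp [redF]
  refine hnp ch hch0 n hn ?_
  apply finsupp_eq_of_all
  intro p' hp'
  haveI : NeZero (p' ^ m.factorization p') :=
    ⟨pow_ne_zero _ (Nat.prime_of_mem_primeFactors hp').ne_zero⟩
  by_cases hne : p' = p
  · subst hne
    rw [redF_iterate, hredp, heq]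
  · rw [redF_iterate, hredq' p' hp' hne, Fmap_iterate_zero]

end CRT
end LCAaux

/-- Writing `m = p_1^{k_1} ⋯ p_h^{k_h}` for its prime factorization, a surjective linear
cellular automaton `T_f` over `ZMod m` is ergodic for the uniform Bernoulli measure
iff, for every prime factor `p_i` of `m`, the cellular automaton over `ZMod p_i^{k_i}`
whose local rule is `f` reduced mod `p_i^{k_i}` is ergodic for the uniform
Bernoulli measure on `(ZMod p_i^{k_i})^ℤ`. -/
theorem ergodic_iff_forall_primePow
    (m : ℕ) (hm : 2 ≤ m) (l r : ℤ) (hlr : l ≤ r) (lam : ℤ → ZMod m)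
    (hsurj : Function.Surjective (cellAuto m l r lam))
    (μ : Measure (ℤ → ZMod m)) (hμ : IsUniformBernoulli m μ) :
    IsErgodic (cellAuto m l r lam) μ ↔
      ∀ p ∈ m.primeFactors,
        ∀ μp : Measure (ℤ → ZMod (p ^ m.factorization p)),
          IsUniformBernoulli (p ^ m.factorization p) μp →
          IsErgodic
            (cellAuto (p ^ m.factorization p) l r
              (fun i => ZMod.castHom (Nat.ordProj_dvd m p)
                (ZMod (p ^ m.factorization p)) (lam i)))
            μp := by
  classical
  haveI : NeZero m := ⟨by omega⟩
  constructor
  · intro herg p hp μp hμp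
    haveI : NeZero (p ^ m.factorization p) :=
      ⟨pow_ne_zero _ (Nat.prime_of_mem_primeFactors hp).ne_zero⟩
    have hnp_m : LCAaux.NoPer m l r lam := LCAaux.noPer_of_ergodic hμ l r lam herg
    have hnp_q := LCAaux.noPer_prime_of_noPer l r lam hnp_m p hp
    have hsurj_q := LCAaux.cellAuto_red_surjective (Nat.ordProj_dvd m p) l r lam hsurj
    exact LCAaux.ergodic_of_noPer hμp l r _ hsurj_q hnp_q
  · intro hall
    have hnp_q : ∀ p ∈ m.primeFactors,
        LCAaux.NoPer (p ^ m.factorization p) l r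
          (fun i => ZMod.castHom (Nat.ordProj_dvd m p)
            (ZMod (p ^ m.factorization p)) (lam i)) := by
      intro p hp
      haveI : NeZero (p ^ m.factorization p) :=
        ⟨pow_ne_zero _ (Nat.prime_of_mem_primeFactors hp).ne_zero⟩
      have hμp := LCAaux.isUB_map_piRed (Nat.ordProj_dvd m p) hμ
      exact LCAaux.noPer_of_ergodic hμp l r _ (hall p hp _ hμp)
    exact LCAaux.ergodic_of_noPer hμ l r lam hsurj
      (LCAaux.noPer_of_forall_prime l r lam hnp_q)
end

section
/- Let m = p^k for a prime p and k ≥ 1, and let T_f be an invertible linear cellular automaton on (ZMod p^k)^ℤ with local rule f(x_l,…,x_r) = Σ_{i=l}^{r} λ_i x_i (mod p^k), 0 ≤ l ≤ r, whose unique permutative index j_p satisfies j_p ≠ 0. Let ℓ be the smallest positive integer with 2ℓ ≥ r − l, and let ξ be the partition of (ZMod p^k)^ℤ into the cylinder sets determined by the coordinates −ℓ, −ℓ+1, …, ℓ. Then there exists an integer N > 0 such that for every n ≥ 0 the partitions ⋁_{i=−n}^{0} T_f^{i} ξ and ⋁_{i=N}^{N+n} T_f^{i} ξ are independent with respect to the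 uniform Bernoulli measure μ; that is, ξ is a Bernoulli partition for T_f. -/
open MeasureTheory

/-- The atom of the cylinder partition `ξ` on coordinates `-ℓ, …, ℓ` determined by the
values `a`. -/
def cylAtom (m : ℕ) (ℓ : ℕ) (a : ℤ → ZMod m) : Set (ℤ → ZMod m) :=
  {x | ∀ i : ℤ, -(ℓ : ℤ) ≤ i → i ≤ (ℓ : ℤ) → x i = a i}

/-- An atom of the join `⋁_{k=a}^{b} T^k ξ` of the partitions `T^k ξ`, `a ≤ k ≤ b`,
where `T` is the invertible map `E` and `ξ` is the cylinder partition on coordinates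
`-ℓ, …, ℓ`: the atom is determined by a choice `c` of one atom of `ξ` for each time
`k ∈ [a, b]`. -/
def joinAtom (m : ℕ) (E : Equiv.Perm (ℤ → ZMod m)) (ℓ : ℕ) (a b : ℤ)
    (c : ℤ → (ℤ → ZMod m)) : Set (ℤ → ZMod m) :=
  ⋂ k ∈ Finset.Icc a b, (E ^ k : Equiv.Perm (ℤ → ZMod m)) '' cylAtom m ℓ (c k)

section AUX
open Finset AddMonoidAlgebra


namespace CellBern
variable {R : Type*} [CommRing R]

/-- shift by `t` as a linear endomorphism of `ℤ → R`. -/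
def shiftE (R : Type*) [CommRing R] (t : ℤ) : Module.End R (ℤ → R) where
  toFun x := fun i => x (i + t)
  map_add' _ _ := rfl
  map_smul' _ _ := rfl

def shiftM (R : Type*) [CommRing R] : Multiplicative ℤ →* Module.End R (ℤ → R) where
  toFun t := shiftE R t.toAdd
  map_one' := by ext x i; simp [shiftE]
  map_mul' s t := by
    ext x i
    show x (i + (s.toAdd + t.toAdd)) = x (i + s.toAdd + t.toAdd)
    rw [add_assoc]

noncomputable def act (R : Type*) [CommRing R] : AddMonoidAlgebra R ℤ →ₐ[R] Module.End R (ℤ → R) :=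
  AddMonoidAlgebra.lift R (Module.End R (ℤ → R)) ℤ (shiftM R)

lemma act_single (t : ℤ) (c : R) (x : ℤ → R) (i : ℤ) :
    act R (single t c) x i = c * x (i + t) := by
  rw [act, AddMonoidAlgebra.lift_single]
  rfl

lemma act_apply (ψ : AddMonoidAlgebra R ℤ) (x : ℤ → R) (i : ℤ) :
    act R ψ x i = ψ.coeff.sum fun t c => c * x (i + t) := by
  induction ψ using AddMonoidAlgebra.induction_linear with
  | zero => simp
  | add f g hf hg =>
    rw [map_add, LinearMap.add_apply, Pi.add_apply, hf, hg, AddMonoidAlgebra.coeff_add,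
      Finsupp.sum_add_index' (by simp) (by intros; rw [add_mul])]
  | single a b =>
    rw [act_single, AddMonoidAlgebra.coeff_single, Finsupp.sum_single_index (by simp)]

lemma act_local {ψ : AddMonoidAlgebra R ℤ} {S : Finset ℤ} (hS : ψ.coeff.support ⊆ S)
    {x y : ℤ → R} {i : ℤ} (h : ∀ t ∈ S, x (i + t) = y (i + t)) :
    act R ψ x i = act R ψ y i := by
  rw [act_apply, act_apply, Finsupp.sum, Finsupp.sum]
  exact Finset.sum_congr rfl fun t ht => by rw [h t (hS ht)]

lemma support_mul_Icc {f g : AddMonoidAlgebra R ℤ} {a b c d : ℤ}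
    (hf : f.coeff.support ⊆ Finset.Icc a b) (hg : g.coeff.support ⊆ Finset.Icc c d) :
    (f * g).coeff.support ⊆ Finset.Icc (a + c) (b + d) := by
  refine (AddMonoidAlgebra.support_coeff_mul_subset f g).trans ?_
  intro t ht
  rcases Finset.mem_add.mp ht with ⟨u, hu, v, hv, rfl⟩
  have hu' := hf hu; have hv' := hg hv
  simp only [Finset.mem_Icc] at *
  omega

lemma support_pow_Icc {f : AddMonoidAlgebra R ℤ} {a b : ℤ}
    (hf : f.coeff.support ⊆ Finset.Icc a b) (n : ℕ) :
    (f ^ n).coeff.support ⊆ Finset.Icc (n * a) (n * b) := by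
  induction n with
  | zero =>
    simp only [pow_zero, Nat.cast_zero, zero_mul]
    rw [AddMonoidAlgebra.one_def]
    exact Finsupp.support_single_subset.trans (by simp)
  | succ n ih =>
    rw [pow_succ]
    refine (support_mul_Icc ih hf).trans ?_
    push_cast; rw [add_one_mul, add_one_mul]

/-- elements with fixed support bound form a submodule. -/
def suppIn (R : Type*) [CommRing R] (S : Finset ℤ) : Submodule R (AddMonoidAlgebra R ℤ) where
  carrier := {f | f.coeff.support ⊆ S}
  zero_mem' := by simp
  add_mem' ha hb := (Finsupp.support_add).trans (Finset.union_subset ha hb)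
  smul_mem' c f hf := (Finsupp.support_smul).trans hf

lemma geom_pow_mem_span {R : Type*} {A : Type*} [CommRing R] [CommRing A] [Algebra R A]
    (x : A) (κ : ℕ) (hκ : 0 < κ) (hx : x ^ κ = 0) (n : ℕ) :
    (∑ i ∈ Finset.range κ, x ^ i) ^ n ∈
      Submodule.span R ((fun i => x ^ i) '' Set.Iio κ) := by
  set Sp := Submodule.span R ((fun i => x ^ i) '' Set.Iio κ) with hSp
  have hmul : ∀ z ∈ Sp, ∀ j : ℕ, z * x ^ j ∈ Sp := by
    intro z hz j
    induction hz using Submodule.span_induction with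
    | mem y hy =>
      rcases hy with ⟨i, hi, rfl⟩
      simp only [Set.mem_Iio] at hi
      rw [← pow_add]
      by_cases hij : i + j < κ
      · exact Submodule.subset_span ⟨i + j, hij, rfl⟩
      · have : x ^ (i + j) = 0 := by
          have : x ^ (i + j) = x ^ κ * x ^ (i + j - κ) := by
            rw [← pow_add]; congr 1; omega
          rw [this, hx, zero_mul]
        rw [this]; exact Sp.zero_mem
    | zero => rw [zero_mul]; exact Sp.zero_mem
    | add y z hy hz hy' hz' => rw [add_mul]; exact Sp.add_mem hy' hz'
    | smul c y hy hy' => rw [smul_mul_assoc]; exact Sp.smul_mem c hy'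
  induction n with
  | zero =>
    rw [pow_zero]
    exact Submodule.subset_span ⟨0, hκ, by simp⟩
  | succ n ih =>
    rw [pow_succ, Finset.mul_sum]
    exact Submodule.sum_mem _ fun i _ => hmul _ ih i

section Inverse

variable (p κ : ℕ) (hp : p.Prime) (hκ : 1 ≤ κ) (l r jp : ℤ)


lemma isUnit_of_not_dvd (hp : p.Prime) (hκ : 1 ≤ κ) (u : (ZMod (p ^ κ))) (hu : ¬ (p : ℕ) ∣ u.val) :
    IsUnit u := by
  have : NeZero (p ^ κ) := ⟨pow_ne_zero _ hp.ne_zero⟩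
  have h1 : ((u.val : ℕ) : (ZMod (p ^ κ))) = u := ZMod.natCast_rightInverse u
  rw [← h1, ZMod.isUnit_iff_coprime]
  exact Nat.Coprime.pow_right _ (((Nat.Prime.coprime_iff_not_dvd hp).mpr hu).symm)

lemma dvd_cast_decomp (hp : p.Prime) (u : (ZMod (p ^ κ))) (hu : (p : ℕ) ∣ u.val) :
    ∃ c : (ZMod (p ^ κ)), u = (p : (ZMod (p ^ κ))) * c := by
  have : NeZero (p ^ κ) := ⟨pow_ne_zero _ hp.ne_zero⟩
  obtain ⟨t, ht⟩ := hu
  refine ⟨(t : (ZMod (p ^ κ))), ?_⟩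
  have h1 : ((u.val : ℕ) : (ZMod (p ^ κ))) = u := ZMod.natCast_rightInverse u
  rw [← h1, ht]
  push_cast
  ring

lemma exists_Pinv (hp : p.Prime) (hκ : 1 ≤ κ) (lam : ℤ → (ZMod (p ^ κ)))
    (hjl : l ≤ jp) (hjr : jp ≤ r)
    (hjpu : ¬ (p : ℕ) ∣ (lam jp).val)
    (hdvd : ∀ j, l ≤ j → j ≤ r → j ≠ jp → (p : ℕ) ∣ (lam j).val) :
    ∃ Pinv : AddMonoidAlgebra (ZMod (p ^ κ)) ℤ,
      (∑ j ∈ Finset.Icc l r, single j (lam j)) * Pinv = 1 ∧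
      ∀ k : ℕ, (Pinv ^ k).coeff.support ⊆
        Finset.Icc (((κ : ℤ) - 1) * (l - jp) - k * jp) (((κ : ℤ) - 1) * (r - jp) - k * jp) := by
  classical
  set A := AddMonoidAlgebra (ZMod (p ^ κ)) ℤ
  set u : (ZMod (p ^ κ)) := lam jp with hu_def
  obtain ⟨U, hU⟩ := isUnit_of_not_dvd p κ hp hκ u hjpu
  set w : (ZMod (p ^ κ)) := ((U⁻¹ : (ZMod (p ^ κ))ˣ) : (ZMod (p ^ κ))) with hw_def
  have hwu : w * u = 1 := by rw [hw_def, ← hU]; exact U.inv_mul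
  set Q : A := ∑ j ∈ (Finset.Icc l r).erase jp, single (j - jp) (lam j) with hQ_def
  have hQsupp : Q.coeff.support ⊆ Finset.Icc (l - jp) (r - jp) := by
    rw [hQ_def, AddMonoidAlgebra.coeff_sum]
    refine Finsupp.support_finset_sum.trans ?_
    intro t ht
    rcases Finset.mem_biUnion.mp ht with ⟨j, hj, htj⟩
    have := Finsupp.support_single_subset htj
    simp only [Finset.mem_singleton] at this
    subst this
    have hj' := Finset.mem_of_mem_erase hj
    simp only [Finset.mem_Icc] at hj' ⊢
    omega
  -- nilpotency of Q
  set c : ℤ → (ZMod (p ^ κ)) := fun j =>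
    if h : (p : ℕ) ∣ (lam j).val then Classical.choose (dvd_cast_decomp p κ hp (lam j) h)
    else 0 with hc_def
  have hQfact : Q = single (0 : ℤ) ((p : ℕ) : (ZMod (p ^ κ))) *
      ∑ j ∈ (Finset.Icc l r).erase jp, single (j - jp) (c j) := by
    rw [Finset.mul_sum]
    refine Finset.sum_congr rfl fun j hj => ?_
    have hj1 := Finset.mem_of_mem_erase hj
    have hj2 := Finset.ne_of_mem_erase hj
    simp only [Finset.mem_Icc] at hj1
    have hd : (p : ℕ) ∣ (lam j).val := hdvd j hj1.1 hj1.2 hj2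
    have hcj : lam j = ((p : ℕ) : (ZMod (p ^ κ))) * c j := by
      rw [hc_def]; simp only [hd, dif_pos]
      exact Classical.choose_spec (dvd_cast_decomp p κ hp (lam j) hd)
    rw [single_mul_single, zero_add, ← hcj]
  have hQnil : Q ^ κ = 0 := by
    rw [hQfact, mul_pow, AddMonoidAlgebra.single_pow]
    have : (((p : ℕ) : (ZMod (p ^ κ)))) ^ κ = 0 := by
      rw [← Nat.cast_pow, ZMod.natCast_self]
    rw [this]
    simp
  -- geometric series
  set x : A := -(single (0 : ℤ) w * Q) with hx_def
  have hxnil : x ^ κ = 0 := by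
    rw [hx_def, neg_pow, mul_pow, hQnil, mul_zero, mul_zero]
  have hxsupp : x.coeff.support ⊆ Finset.Icc (l - jp) (r - jp) := by
    rw [hx_def, AddMonoidAlgebra.coeff_neg, Finsupp.support_neg]
    have h0 : (single (0 : ℤ) w : A).coeff.support ⊆ Finset.Icc 0 0 := by
      refine Finsupp.support_single_subset.trans ?_; simp
    refine (support_mul_Icc h0 hQsupp).trans ?_
    simp
  set G : A := ∑ i ∈ Finset.range κ, x ^ i with hG_def
  set V : A := single (0 : ℤ) w * G with hV_def
  have h1x : single (0 : ℤ) w * (single (0 : ℤ) u + Q) = 1 - x := by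
    rw [mul_add, single_mul_single, add_zero, hwu, ← AddMonoidAlgebra.one_def, hx_def]
    ring
  have hUV : (single (0 : ℤ) u + Q) * V = 1 := by
    have hg : G * (x - 1) = x ^ κ - 1 := geom_sum_mul x κ
    rw [hxnil, zero_sub] at hg
    calc (single (0 : ℤ) u + Q) * V
        = (single (0 : ℤ) w * (single (0 : ℤ) u + Q)) * G := by rw [hV_def]; ring
      _ = (1 - x) * G := by rw [h1x]
      _ = -(G * (x - 1)) := by ring
      _ = 1 := by rw [hg]; ring
  have hPfact : (∑ j ∈ Finset.Icc l r, single j (lam j) : A)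
      = single jp 1 * (single (0 : ℤ) u + Q) := by
    rw [mul_add, single_mul_single, add_zero, one_mul, Finset.mul_sum]
    have : ∀ j ∈ (Finset.Icc l r).erase jp,
        single jp (1 : (ZMod (p ^ κ))) * single (j - jp) (lam j) = single j (lam j) := by
      intro j _
      rw [single_mul_single, one_mul]
      congr 1
      ring
    rw [Finset.sum_congr rfl this, add_comm, Finset.sum_erase_add]
    simp only [Finset.mem_Icc]; exact ⟨hjl, hjr⟩
  refine ⟨single (-jp) 1 * V, ?_, ?_⟩
  · calc (∑ j ∈ Finset.Icc l r, single j (lam j) : A) * (single (-jp) 1 * V)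
        = (single jp 1 * single (-jp) (1 : (ZMod (p ^ κ)))) * ((single (0 : ℤ) u + Q) * V) := by
          rw [hPfact]; ring
      _ = 1 := by
          rw [hUV, single_mul_single, add_neg_cancel, one_mul, mul_one,
            ← AddMonoidAlgebra.one_def]
  · intro k
    have hGk : (G ^ k).coeff.support ⊆
        Finset.Icc (((κ : ℤ) - 1) * (l - jp)) (((κ : ℤ) - 1) * (r - jp)) := by
      have hspan := geom_pow_mem_span (R := (ZMod (p ^ κ))) x κ hκ hxnil k
      have hle : Submodule.span (ZMod (p ^ κ)) ((fun i => x ^ i) '' Set.Iio κ) ≤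
          suppIn (ZMod (p ^ κ)) (Finset.Icc (((κ : ℤ) - 1) * (l - jp)) (((κ : ℤ) - 1) * (r - jp))) := by
        rw [Submodule.span_le]
        rintro _ ⟨i, hi, rfl⟩
        simp only [Set.mem_Iio] at hi
        show (x ^ i) ∈ suppIn (ZMod (p ^ κ)) _
        have hil : (i : ℤ) ≤ (κ : ℤ) - 1 := by
          have : (i : ℤ) < (κ : ℤ) := by exact_mod_cast hi
          omega
        have h1 : ((κ : ℤ) - 1) * (l - jp) ≤ (i : ℤ) * (l - jp) :=
          mul_le_mul_of_nonpos_right hil (by omega)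
        have h2 : (i : ℤ) * (r - jp) ≤ ((κ : ℤ) - 1) * (r - jp) :=
          mul_le_mul_of_nonneg_right hil (by omega)
        exact (support_pow_Icc hxsupp i).trans (Finset.Icc_subset_Icc h1 h2)
      exact hle hspan
    have heq : (single (-jp) (1 : (ZMod (p ^ κ))) * V) ^ k
        = single ((-(k * jp)) : ℤ) (1 : (ZMod (p ^ κ))) * (single (0 : ℤ) (w ^ k) * G ^ k) := by
      rw [hV_def, mul_pow, mul_pow, AddMonoidAlgebra.single_pow,
        AddMonoidAlgebra.single_pow, one_pow]
      simp [nsmul_eq_mul]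
    rw [heq]
    have h1 : (single ((-(k * jp)) : ℤ) (1 : (ZMod (p ^ κ))) : A).coeff.support ⊆
        Finset.Icc (-(k * jp) : ℤ) (-(k * jp) : ℤ) :=
      Finsupp.support_single_subset.trans (by simp)
    have h2 : (single (0 : ℤ) (w ^ k) : A).coeff.support ⊆ Finset.Icc (0 : ℤ) 0 :=
      Finsupp.support_single_subset.trans (by simp)
    refine (support_mul_Icc h1 (support_mul_Icc h2 hGk)).trans
      (Finset.Icc_subset_Icc (le_of_eq (by ring)) (le_of_eq (by ring)))

end Inverse



variable {q : ℕ}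

noncomputable def extF (F : Finset ℤ) (v : F → ZMod q) : ℤ → ZMod q :=
  fun i => if h : i ∈ F then v ⟨i, h⟩ else 0

def resF (F : Finset ℤ) (x : ℤ → ZMod q) : F → ZMod q := fun i => x i

def cylF (F : Finset ℤ) (v : F → ZMod q) : Set (ℤ → ZMod q) := {x | resF F x = v}

lemma resF_extF (F : Finset ℤ) (v : F → ZMod q) : resF F (extF F v) = v := by
  funext i
  simp [resF, extF, i.2]

lemma mem_cylF {F : Finset ℤ} {v : F → ZMod q} {x : ℤ → ZMod q} :
    x ∈ cylF F v ↔ ∀ i ∈ F, x i = extF F v i := by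
  constructor
  · intro h i hi
    have h2 := congrFun h ⟨i, hi⟩
    simp only [resF] at h2
    rw [h2]
    simp [extF, hi]
  · intro h
    funext i
    rw [resF, h i i.2]
    simp [extF, i.2]

lemma cylF_measurable (F : Finset ℤ) (v : F → ZMod q) : MeasurableSet (cylF F v) := by
  have : cylF F v = ⋂ i ∈ F, (fun x : ℤ → ZMod q => x i) ⁻¹' {extF F v i} := by
    ext x
    simp [mem_cylF, Set.mem_iInter]
  rw [this]
  exact MeasurableSet.biInter (Set.to_countable _)
    (fun i _ => (measurable_pi_apply i) (measurableSet_singleton _))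

lemma measure_cylF (μ : Measure (ℤ → ZMod q)) (hμ : IsUniformBernoulli q μ)
    (F : Finset ℤ) (v : F → ZMod q) : μ (cylF F v) = ((q : ENNReal))⁻¹ ^ F.card := by
  have : cylF F v = {x | ∀ i ∈ F, x i = extF F v i} := Set.ext fun x => mem_cylF
  rw [this, hμ.2]

lemma measure_cylF_inter (μ : Measure (ℤ → ZMod q)) (hμ : IsUniformBernoulli q μ)
    (F₁ F₂ : Finset ℤ) (hdisj : Disjoint F₁ F₂) (v : F₁ → ZMod q) (w : F₂ → ZMod q) :
    μ (cylF F₁ v ∩ cylF F₂ w) = ((q : ENNReal))⁻¹ ^ F₁.card * ((q : ENNReal))⁻¹ ^ F₂.card := by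
  classical
  set g : ℤ → ZMod q := fun i => if i ∈ F₁ then extF F₁ v i else extF F₂ w i with hg
  have : cylF F₁ v ∩ cylF F₂ w = {x | ∀ i ∈ F₁ ∪ F₂, x i = g i} := by
    ext x
    simp only [Set.mem_inter_iff, mem_cylF, Set.mem_setOf_eq, Finset.mem_union]
    constructor
    · rintro ⟨h1, h2⟩ i hi
      rcases hi with hi | hi
      · have hgi : g i = extF F₁ v i := by simp [hg, hi]
        rw [hgi]; exact h1 i hi
      · have hni : i ∉ F₁ := fun hmem => (Finset.disjoint_left.mp hdisj) hmem hi
        have hgi : g i = extF F₂ w i := by simp [hg, hni]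
        rw [hgi]; exact h2 i hi
    · intro h
      constructor
      · intro i hi
        have := h i (Or.inl hi)
        simpa [hg, hi] using this
      · intro i hi
        have hni : i ∉ F₁ := fun hmem => (Finset.disjoint_left.mp hdisj) hmem hi
        have := h i (Or.inr hi)
        simpa [hg, hni] using this
  rw [this, hμ.2, Finset.card_union_of_disjoint hdisj, pow_add]

lemma indep_of_determined (μ : Measure (ℤ → ZMod q))
    (hμ : IsUniformBernoulli q μ) [NeZero q] (F₁ F₂ : Finset ℤ) (hdisj : Disjoint F₁ F₂)
    (A B : Set (ℤ → ZMod q))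
    (hA : ∀ x y : ℤ → ZMod q, (∀ i ∈ F₁, x i = y i) → x ∈ A → y ∈ A)
    (hB : ∀ x y : ℤ → ZMod q, (∀ i ∈ F₂, x i = y i) → x ∈ B → y ∈ B) :
    μ (A ∩ B) = μ A * μ B := by
  classical
  set WA : Finset (F₁ → ZMod q) := Finset.univ.filter (fun v => extF F₁ v ∈ A) with hWA
  set WB : Finset (F₂ → ZMod q) := Finset.univ.filter (fun w => extF F₂ w ∈ B) with hWB
  have hmemA : ∀ x, x ∈ A ↔ resF F₁ x ∈ WA := by
    intro x
    rw [hWA, Finset.mem_filter]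
    simp only [Finset.mem_univ, true_and]
    constructor
    · intro hx
      exact hA x (extF F₁ (resF F₁ x)) (fun i hi => by simp [extF, resF, hi]) hx
    · intro hx
      exact hA (extF F₁ (resF F₁ x)) x (fun i hi => by simp [extF, resF, hi]) hx
  have hmemB : ∀ x, x ∈ B ↔ resF F₂ x ∈ WB := by
    intro x
    rw [hWB, Finset.mem_filter]
    simp only [Finset.mem_univ, true_and]
    constructor
    · intro hx
      exact hB x (extF F₂ (resF F₂ x)) (fun i hi => by simp [extF, resF, hi]) hx
    · intro hx
      exact hB (extF F₂ (resF F₂ x)) x (fun i hi => by simp [extF, resF, hi]) hx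
  have hAeq : A = ⋃ v ∈ WA, cylF F₁ v := by
    ext x
    simp only [Set.mem_iUnion, exists_prop]
    rw [hmemA]
    constructor
    · intro h; exact ⟨resF F₁ x, h, rfl⟩
    · rintro ⟨v, hv, hxv⟩; rwa [show resF F₁ x = v from hxv]
  have hBeq : B = ⋃ w ∈ WB, cylF F₂ w := by
    ext x
    simp only [Set.mem_iUnion, exists_prop]
    rw [hmemB]
    constructor
    · intro h; exact ⟨resF F₂ x, h, rfl⟩
    · rintro ⟨v, hv, hxv⟩; rwa [show resF F₂ x = v from hxv]
  have hdisjA : ∀ v ∈ WA, ∀ v' ∈ WA, v ≠ v' → Disjoint (cylF F₁ v) (cylF F₁ v') := by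
    intro v _ v' _ hne
    rw [Set.disjoint_left]
    intro x hx hx'
    exact hne (hx.symm.trans hx')
  have hμA : μ A = WA.card * ((q : ENNReal))⁻¹ ^ F₁.card := by
    rw [hAeq, measure_biUnion_finset hdisjA (fun v _ => cylF_measurable F₁ v)]
    simp [measure_cylF μ hμ, Finset.sum_const, nsmul_eq_mul]
  have hdisjB : ∀ w ∈ WB, ∀ w' ∈ WB, w ≠ w' → Disjoint (cylF F₂ w) (cylF F₂ w') := by
    intro v _ v' _ hne
    rw [Set.disjoint_left]
    intro x hx hx'
    exact hne (hx.symm.trans hx')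
  have hμB : μ B = WB.card * ((q : ENNReal))⁻¹ ^ F₂.card := by
    rw [hBeq, measure_biUnion_finset hdisjB (fun w _ => cylF_measurable F₂ w)]
    simp [measure_cylF μ hμ, Finset.sum_const, nsmul_eq_mul]
  have hABeq : A ∩ B = ⋃ z ∈ WA ×ˢ WB, (cylF F₁ z.1 ∩ cylF F₂ z.2) := by
    ext x
    simp only [Set.mem_iUnion, exists_prop, Set.mem_inter_iff, Finset.mem_product]
    constructor
    · rintro ⟨h1, h2⟩
      exact ⟨(resF F₁ x, resF F₂ x), ⟨(hmemA x).mp h1, (hmemB x).mp h2⟩, rfl, rfl⟩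
    · rintro ⟨⟨v, w⟩, ⟨hv, hw⟩, hxv, hxw⟩
      exact ⟨(hmemA x).mpr (by rwa [show resF F₁ x = v from hxv]),
        (hmemB x).mpr (by rwa [show resF F₂ x = w from hxw])⟩
  have hdisjAB : ∀ z ∈ WA ×ˢ WB, ∀ z' ∈ WA ×ˢ WB, z ≠ z' →
      Disjoint (cylF F₁ z.1 ∩ cylF F₂ z.2) (cylF F₁ z'.1 ∩ cylF F₂ z'.2) := by
    rintro ⟨v, w⟩ _ ⟨v', w'⟩ _ hne
    rw [Set.disjoint_left]
    rintro x ⟨hx1, hx2⟩ ⟨hx1', hx2'⟩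
    exact hne (by
      ext : 1
      · exact (hx1.symm.trans hx1')
      · exact (hx2.symm.trans hx2'))
  have hμAB : μ (A ∩ B) =
      (WA.card * WB.card : ℕ) * (((q : ENNReal))⁻¹ ^ F₁.card * ((q : ENNReal))⁻¹ ^ F₂.card) := by
    rw [hABeq, measure_biUnion_finset hdisjAB
      (fun z _ => (cylF_measurable F₁ z.1).inter (cylF_measurable F₂ z.2))]
    rw [Finset.sum_congr rfl (fun z _ => measure_cylF_inter μ hμ F₁ F₂ hdisj z.1 z.2)]
    rw [Finset.sum_const, Finset.card_product, nsmul_eq_mul]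
    try push_cast
    try ring
  rw [hμAB, hμA, hμB]
  try push_cast
  try ring


end CellBern

end AUX

/-- For an invertible linear cellular automaton over `ZMod p^k` with `0 ≤ l ≤ r` whose
unique permutative index `j_p` is nonzero, letting `ℓ` be the smallest positive integer
with `2ℓ ≥ r - l`, the cylinder partition `ξ` on coordinates `-ℓ, …, ℓ` is a Bernoulli
partition: there is `N > 0` such that for every `n ≥ 0` the joins `⋁_{i=-n}^{0} T_f^i ξ`
and `⋁_{i=N}^{N+n} T_f^i ξ` are independent for the uniform Bernoulli measure. -/
theorem cylinder_partition_is_bernoulli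
    (p k : ℕ) (hp : p.Prime) (hk : 1 ≤ k) (l r jp : ℤ)
    (hl : 0 ≤ l) (hlr : l ≤ r)
    (lam : ℤ → ZMod (p ^ k))
    (μ : Measure (ℤ → ZMod (p ^ k))) (hμ : IsUniformBernoulli (p ^ k) μ)
    (hbij : Function.Bijective (cellAuto (p ^ k) l r lam))
    (hjp : l ≤ jp ∧ jp ≤ r ∧ ¬ (p : ℕ) ∣ (lam jp).val)
    (huniq : ∀ j : ℤ, l ≤ j → j ≤ r → ¬ (p : ℕ) ∣ (lam j).val → j = jp)
    (hjp0 : jp ≠ 0)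
    (ℓ : ℕ) (hℓ1 : 1 ≤ ℓ) (hℓ2 : r - l ≤ 2 * (ℓ : ℤ))
    (hℓmin : ∀ ℓ₂ : ℕ, 1 ≤ ℓ₂ → r - l ≤ 2 * (ℓ₂ : ℤ) → ℓ ≤ ℓ₂) :
    ∃ N : ℕ, 0 < N ∧
      ∀ n : ℕ, ∀ c d : ℤ → (ℤ → ZMod (p ^ k)),
        μ (joinAtom (p ^ k)
              (Equiv.ofBijective (cellAuto (p ^ k) l r lam) hbij) ℓ (-(n : ℤ)) 0 c ∩
            joinAtom (p ^ k)
              (Equiv.ofBijective (cellAuto (p ^ k) l r lam) hbij) ℓ (N : ℤ) ((N : ℤ) + n) d) =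
          μ (joinAtom (p ^ k)
              (Equiv.ofBijective (cellAuto (p ^ k) l r lam) hbij) ℓ (-(n : ℤ)) 0 c) *
            μ (joinAtom (p ^ k)
              (Equiv.ofBijective (cellAuto (p ^ k) l r lam) hbij) ℓ (N : ℤ) ((N : ℤ) + n) d) := by
  classical
  obtain ⟨hjl, hjr, hjpu⟩ := hjp
  haveI : NeZero (p ^ k) := ⟨pow_ne_zero _ hp.ne_zero⟩
  set T := cellAuto (p ^ k) l r lam with hT
  set E := Equiv.ofBijective T hbij with hEdef
  set P : AddMonoidAlgebra (ZMod (p ^ k)) ℤ :=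
    ∑ j ∈ Finset.Icc l r, AddMonoidAlgebra.single j (lam j) with hPdef
  obtain ⟨Pinv, hPPinv, hPinvSupp⟩ :=
    CellBern.exists_Pinv p k l r jp hp hk lam hjl hjr hjpu
      (fun j h1 h2 h3 => by
        by_contra hc
        exact h3 (huniq j h1 h2 hc))
  have hjp1 : 1 ≤ jp := by
    rcases lt_or_ge jp 1 with h | h
    · exfalso; apply hjp0; omega
    · exact h
  have hr0 : 0 ≤ r := le_trans hl hlr
  have hk1 : (1 : ℤ) ≤ (k : ℤ) := by exact_mod_cast hk
  set M : ℤ := ((k : ℤ) - 1) * (r - jp) with hMdef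
  have hM0 : 0 ≤ M := mul_nonneg (by omega) (by omega)
  refine ⟨2 * ℓ + 1 + M.toNat, by omega, ?_⟩
  intro n c d
  set N : ℕ := 2 * ℓ + 1 + M.toNat with hNdef
  have hNM : (N : ℤ) = 2 * ℓ + 1 + M := by
    rw [hNdef]
    push_cast
    rw [Int.toNat_of_nonneg hM0]
  -- basic facts about the act representation
  have hTact : ∀ x, T x = CellBern.act (ZMod (p ^ k)) P x := by
    intro x
    funext i
    rw [hT, hPdef, map_sum, cellAuto]
    rw [LinearMap.coe_sum, Finset.sum_apply, Finset.sum_apply]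
    exact Finset.sum_congr rfl fun j _ => (CellBern.act_single j (lam j) x i).symm
  have hPsupp : P.coeff.support ⊆ Finset.Icc l r := by
    rw [hPdef, AddMonoidAlgebra.coeff_sum]
    refine Finsupp.support_finset_sum.trans ?_
    intro t ht
    rcases Finset.mem_biUnion.mp ht with ⟨j, hj, htj⟩
    have := Finsupp.support_single_subset htj
    simp only [Finset.mem_singleton] at this
    subst this
    exact hj
  have hiter : ∀ (m : ℕ) (x : ℤ → (ZMod (p ^ k))), (⇑E)^[m] x = CellBern.act (ZMod (p ^ k)) (P ^ m) x := by
    intro m x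
    have hc : ⇑E = ⇑(CellBern.act (ZMod (p ^ k)) P) := by
      funext z
      exact hTact z
    rw [hc, map_pow, Module.End.pow_apply]
  have hEs : ⇑E.symm = ⇑(CellBern.act (ZMod (p ^ k)) Pinv) := by
    funext x
    apply hbij.injective
    show T (E.symm x) = T (CellBern.act (ZMod (p ^ k)) Pinv x)
    have h1 : T (E.symm x) = E (E.symm x) := rfl
    rw [h1, Equiv.apply_symm_apply, hTact]
    rw [← Module.End.mul_apply, ← map_mul, hPPinv, map_one, Module.End.one_apply]
  have hiterS : ∀ (m : ℕ) (x : ℤ → (ZMod (p ^ k))), (⇑E.symm)^[m] x = CellBern.act (ZMod (p ^ k)) (Pinv ^ m) x := by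
    intro m x
    rw [hEs, map_pow, Module.End.pow_apply]
  -- membership characterizations
  have hmem1 : ∀ (t : ℤ), t ≤ 0 → ∀ (a : ℤ → (ZMod (p ^ k))) (x : ℤ → (ZMod (p ^ k))),
      (x ∈ (E ^ t : Equiv.Perm (ℤ → (ZMod (p ^ k)))) '' cylAtom (p ^ k) ℓ a ↔
        CellBern.act (ZMod (p ^ k)) (P ^ (-t).toNat) x ∈ cylAtom (p ^ k) ℓ a) := by
    intro t ht a x
    have hEt : (E ^ t : Equiv.Perm (ℤ → ZMod (p ^ k))) = (E ^ ((-t).toNat : ℕ))⁻¹ := by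
      rw [← zpow_natCast, ← zpow_neg]
      congr 1
      omega
    rw [hEt, Equiv.image_eq_preimage_symm, Set.mem_preimage]
    have hcoe : ((E ^ ((-t).toNat))⁻¹ : Equiv.Perm (ℤ → (ZMod (p ^ k)))).symm
        = E ^ ((-t).toNat) := rfl
    rw [hcoe, Equiv.Perm.coe_pow, hiter]
  have hmem2 : ∀ (t : ℤ), 0 ≤ t → ∀ (a : ℤ → (ZMod (p ^ k))) (x : ℤ → (ZMod (p ^ k))),
      (x ∈ (E ^ t : Equiv.Perm (ℤ → (ZMod (p ^ k)))) '' cylAtom (p ^ k) ℓ a ↔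
        CellBern.act (ZMod (p ^ k)) (Pinv ^ t.toNat) x ∈ cylAtom (p ^ k) ℓ a) := by
    intro t ht a x
    have hEt : (E ^ t : Equiv.Perm (ℤ → ZMod (p ^ k))) = E ^ (t.toNat : ℕ) := by
      rw [← zpow_natCast]
      congr 1
      omega
    rw [hEt, Equiv.image_eq_preimage_symm, Set.mem_preimage]
    have hcoe : ((E ^ (t.toNat)) : Equiv.Perm (ℤ → (ZMod (p ^ k)))).symm
        = (E.symm) ^ (t.toNat) := by
      calc ((E ^ (t.toNat)) : Equiv.Perm (ℤ → (ZMod (p ^ k)))).symm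
          = (E ^ t.toNat)⁻¹ := rfl
        _ = E⁻¹ ^ t.toNat := (inv_pow E t.toNat).symm
        _ = E.symm ^ t.toNat := rfl
    rw [hcoe, Equiv.Perm.coe_pow, hiterS]
  -- the two coordinate windows
  set F₁ : Finset ℤ := Finset.Icc (-(ℓ : ℤ)) ((ℓ : ℤ) + n * r) with hF₁
  set F₂ : Finset ℤ :=
    Finset.Icc (-(ℓ : ℤ) + (((k : ℤ) - 1) * (l - jp) - ((N : ℤ) + n) * jp)) (-(ℓ : ℤ) - 1)
    with hF₂
  have hdisj : Disjoint F₁ F₂ := by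
    rw [Finset.disjoint_left]
    intro i hi1 hi2
    rw [hF₁, Finset.mem_Icc] at hi1
    rw [hF₂, Finset.mem_Icc] at hi2
    omega
  -- determinedness of the past join
  have hdet1 : ∀ x y : ℤ → (ZMod (p ^ k)), (∀ i ∈ F₁, x i = y i) →
      x ∈ joinAtom (p ^ k) E ℓ (-(n : ℤ)) 0 c → y ∈ joinAtom (p ^ k) E ℓ (-(n : ℤ)) 0 c := by
    intro x y hxy hx
    simp only [joinAtom, Set.mem_iInter] at hx ⊢
    intro t ht
    have htt := ht
    rw [Finset.mem_Icc] at htt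
    have hx' := (hmem1 t htt.2 (c t) x).mp (hx t ht)
    rw [hmem1 t htt.2 (c t) y]
    intro i hi1 hi2
    set m : ℕ := (-t).toNat with hm
    have hmn : (m : ℤ) ≤ n := by
      rw [hm, Int.toNat_of_nonneg (by omega)]
      omega
    have hloc : CellBern.act (ZMod (p ^ k)) (P ^ m) y i = CellBern.act (ZMod (p ^ k)) (P ^ m) x i := by
      refine CellBern.act_local (CellBern.support_pow_Icc hPsupp m) ?_
      intro s hs
      rw [Finset.mem_Icc] at hs
      have h1 : 0 ≤ (m : ℤ) * l := mul_nonneg (by positivity) hl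
      have h2 : (m : ℤ) * r ≤ (n : ℤ) * r := mul_le_mul_of_nonneg_right hmn hr0
      exact (hxy (i + s) (by rw [hF₁, Finset.mem_Icc]; constructor <;> linarith)).symm
    rw [hloc]
    exact hx' i hi1 hi2
  -- determinedness of the future join
  have hdet2 : ∀ x y : ℤ → (ZMod (p ^ k)), (∀ i ∈ F₂, x i = y i) →
      x ∈ joinAtom (p ^ k) E ℓ (N : ℤ) ((N : ℤ) + n) d →
      y ∈ joinAtom (p ^ k) E ℓ (N : ℤ) ((N : ℤ) + n) d := by
    intro x y hxy hx
    simp only [joinAtom, Set.mem_iInter] at hx ⊢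
    intro t ht
    have htt := ht
    rw [Finset.mem_Icc] at htt
    have htN : (0 : ℤ) ≤ t := le_trans (by positivity) htt.1
    have hx' := (hmem2 t htN (d t) x).mp (hx t ht)
    rw [hmem2 t htN (d t) y]
    intro i hi1 hi2
    set m : ℕ := t.toNat with hm
    have hmZ : (m : ℤ) = t := Int.toNat_of_nonneg htN
    have hloc : CellBern.act (ZMod (p ^ k)) (Pinv ^ m) y i = CellBern.act (ZMod (p ^ k)) (Pinv ^ m) x i := by
      refine CellBern.act_local (hPinvSupp m) ?_
      intro s hs
      rw [Finset.mem_Icc] at hs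
      refine (hxy (i + s) ?_).symm
      rw [hF₂, Finset.mem_Icc]
      have hb1 : ((k : ℤ) - 1) * (l - jp) ≤ ((k : ℤ) - 1) * (r - jp) :=
        mul_le_mul_of_nonneg_left (by omega) (by omega)
      have hb2 : (m : ℤ) * jp ≤ ((N : ℤ) + n) * jp := by
        refine mul_le_mul_of_nonneg_right ?_ (by omega)
        omega
      have hb3 : (N : ℤ) * jp ≤ (m : ℤ) * jp := by
        refine mul_le_mul_of_nonneg_right ?_ (by omega)
        omega
      have hb4 : (N : ℤ) ≤ (N : ℤ) * jp := le_mul_of_one_le_right (by positivity) hjp1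
      constructor
      · have := hs.1
        omega
      · -- i + s ≤ ℓ + M - m*jp ≤ ℓ + M - N*jp ≤ -ℓ - 1
        have := hs.2
        rw [hMdef] at hNM
        omega
    rw [hloc]
    exact hx' i hi1 hi2
  exact CellBern.indep_of_determined μ hμ F₁ F₂ hdisj _ _ hdet1 hdet2
end
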